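/- arXiv:2209.09886 — 8 statements merged into one kernel-verified Lean document; each statement's English description precedes it below -/
import Mathlib

section
/- For every exponent p ∈ (1, ∞), every real number γ < (p-1)/p, and every integer k ≥ 1, there exists a constant C = C(k, p, γ) > 0 such that for every function f : [0, ∞) → ℝ that is k times continuously differentiable and satisfies f(0) = f'(0) = ⋯ = f^(k-1)(0) = 0, one has (∫₀^∞ |x^(γ-k) f(x)|^p dx)^(1/p) ≤ C · (∫₀^∞ |x^γ f^(k)(x)|^p dx)^(1/p). -/
open Set MeasureTheory intervalIntegral
open scoped ENNReal

-- L2: lintegral of power on Ioc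
lemma lint_Ioc_rpow {r x : ℝ} (hr : -1 < r) (hx : 0 < x) :
    ∫⁻ t in Ioc (0:ℝ) x, ENNReal.ofReal (t ^ r) = ENNReal.ofReal (x ^ (r+1) / (r+1)) := by
  have hint : IntegrableOn (fun t : ℝ => t ^ r) (Ioc 0 x) := by
    rw [← intervalIntegrable_iff_integrableOn_Ioc_of_le hx.le]
    exact intervalIntegral.intervalIntegrable_rpow' hr
  rw [← MeasureTheory.ofReal_integral_eq_lintegral_ofReal hint]
  · congr 1
    rw [← intervalIntegral.integral_of_le hx.le, integral_rpow (Or.inl hr),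
      Real.zero_rpow (by linarith)]
    ring
  · filter_upwards [ae_restrict_mem measurableSet_Ioc] with t ht
    exact Real.rpow_nonneg ht.1.le r

-- L3: lintegral of power on Ioi
lemma lint_Ioi_rpow {r t : ℝ} (hr : r < -1) (ht : 0 < t) :
    ∫⁻ x in Ioi t, ENNReal.ofReal (x ^ r) = ENNReal.ofReal (t ^ (r+1) / (-(r+1))) := by
  rw [← MeasureTheory.ofReal_integral_eq_lintegral_ofReal (integrableOn_Ioi_rpow_of_lt hr ht)]
  · rw [integral_Ioi_rpow_of_lt hr ht]
    congr 1
    rw [div_neg, neg_div]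
  · filter_upwards [ae_restrict_mem measurableSet_Ioi] with x hx
    exact Real.rpow_nonneg (ht.trans hx).le r

lemma tonelli_aux (ψ φ : ℝ → ℝ≥0∞) (hψ : Measurable ψ) (hφ : Measurable φ) :
    ∫⁻ x in Ioi (0:ℝ), ψ x * ∫⁻ t in Ioc 0 x, φ t
      = ∫⁻ t in Ioi (0:ℝ), φ t * ∫⁻ x in Ioi 0 ∩ Ici t, ψ x := by
  have hS : MeasurableSet {z : ℝ × ℝ | z.2 ≤ z.1} := measurableSet_le measurable_snd measurable_fst
  set F : ℝ → ℝ → ℝ≥0∞ := fun x t => ψ x * φ t * ({z : ℝ × ℝ | z.2 ≤ z.1}.indicator 1 (x, t))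
    with hF
  have hFm : Measurable (Function.uncurry F) := by
    apply Measurable.mul
    · exact (hψ.comp measurable_fst).mul (hφ.comp measurable_snd)
    · exact (measurable_one.indicator hS)
  have h1 : ∀ x : ℝ, (∫⁻ t in Ioi (0:ℝ), F x t) = ψ x * ∫⁻ t in Ioc 0 x, φ t := by
    intro x
    have he : ∀ t : ℝ, F x t = ψ x * (Iic x).indicator φ t := by
      intro t
      by_cases h : t ≤ x
      · simp [hF, Set.indicator_of_mem, h, Set.mem_setOf_eq, mul_assoc]
      · simp [hF, Set.indicator_of_notMem, h, Set.mem_setOf_eq]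
    simp_rw [he]
    rw [lintegral_const_mul _ (hφ.indicator measurableSet_Iic),
      lintegral_indicator measurableSet_Iic, Measure.restrict_restrict measurableSet_Iic,
      Set.Iic_inter_Ioi]
  have h2 : ∀ t : ℝ, (∫⁻ x in Ioi (0:ℝ), F x t) = φ t * ∫⁻ x in Ioi 0 ∩ Ici t, ψ x := by
    intro t
    have he : ∀ x : ℝ, F x t = φ t * (Ici t).indicator ψ x := by
      intro x
      by_cases h : t ≤ x
      · simp [hF, Set.indicator_of_mem, h, Set.mem_setOf_eq]
        ring
      · simp [hF, Set.indicator_of_notMem, h, Set.mem_setOf_eq]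
    simp_rw [he]
    rw [lintegral_const_mul _ (hψ.indicator measurableSet_Ici),
      lintegral_indicator measurableSet_Ici, Measure.restrict_restrict measurableSet_Ici,
      Set.inter_comm]
  calc ∫⁻ x in Ioi (0:ℝ), ψ x * ∫⁻ t in Ioc 0 x, φ t
      = ∫⁻ x in Ioi (0:ℝ), ∫⁻ t in Ioi (0:ℝ), F x t := by simp_rw [h1]
    _ = ∫⁻ t in Ioi (0:ℝ), ∫⁻ x in Ioi (0:ℝ), F x t :=
        lintegral_lintegral_swap hFm.aemeasurable
    _ = ∫⁻ t in Ioi (0:ℝ), φ t * ∫⁻ x in Ioi 0 ∩ Ici t, ψ x := by simp_rw [h2]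

lemma ftc_bound {g : ℝ → ℝ} (hgc : ContinuousOn g (Ici 0))
    (hgd : DifferentiableOn ℝ g (Ici 0))
    (hg'c : ContinuousOn (derivWithin g (Ici 0)) (Ici 0)) (hg0 : g 0 = 0) {x : ℝ}
    (hx : 0 < x) :
    ENNReal.ofReal |g x| ≤ ∫⁻ t in Ioc (0:ℝ) x, ENNReal.ofReal |derivWithin g (Ici 0) t| := by
  set g' := derivWithin g (Ici 0) with hg'
  have hg'cont : ContinuousOn g' (Ici 0) := hg'c
  have hcont : ContinuousOn g (Icc 0 x) := hgc.mono Icc_subset_Ici_self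
  have hderiv : ∀ t ∈ Ioo 0 x, HasDerivWithinAt g (g' t) (Ioi t) t := by
    intro t ht
    exact ((hgd t ht.1.le).hasDerivWithinAt).mono
      (fun y hy => (ht.1.trans hy).le)
  have hint : IntervalIntegrable g' volume 0 x := by
    apply ContinuousOn.intervalIntegrable
    rw [uIcc_of_le hx.le]
    exact hg'cont.mono Icc_subset_Ici_self
  have heq : g x = ∫ t in Ioc (0:ℝ) x, g' t := by
    rw [← intervalIntegral.integral_of_le hx.le,
      intervalIntegral.integral_eq_sub_of_hasDeriv_right_of_le hx.le hcont hderiv hint, hg0,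
      sub_zero]
  have hIoc : IntegrableOn g' (Ioc 0 x) :=
    (intervalIntegrable_iff_integrableOn_Ioc_of_le hx.le).1 hint
  calc ENNReal.ofReal |g x| ≤ ENNReal.ofReal (∫ t in Ioc (0:ℝ) x, |g' t|) := by
        apply ENNReal.ofReal_le_ofReal
        rw [heq]
        exact (norm_integral_le_integral_norm g')
    _ = ∫⁻ t in Ioc (0:ℝ) x, ENNReal.ofReal |g' t| := by
        rw [MeasureTheory.ofReal_integral_eq_lintegral_ofReal hIoc.abs]
        exact Filter.Eventually.of_forall (fun t => abs_nonneg _)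

lemma hardy_base (p γ : ℝ) (hp : 1 < p) (hγ : γ < (p - 1) / p) :
    ∃ C > 0, ∀ g : ℝ → ℝ, ContinuousOn g (Ici 0) → DifferentiableOn ℝ g (Ici 0) →
      ContinuousOn (derivWithin g (Ici 0)) (Ici 0) → g 0 = 0 →
      (∫⁻ x in Ioi (0:ℝ), ENNReal.ofReal (|x ^ (γ - 1) * g x| ^ p)) ^ (1 / p)
        ≤ ENNReal.ofReal C *
          (∫⁻ x in Ioi (0:ℝ),
            ENNReal.ofReal (|x ^ γ * derivWithin g (Ici 0) x| ^ p)) ^ (1 / p) := by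
  have hp0 : 0 < p := lt_trans one_pos hp
  have hp1 : 0 < p - 1 := by linarith
  set q := p / (p - 1) with hqdef
  have hpq : p.HolderConjugate q := Real.HolderConjugate.conjExponent hp
  have hq0 : 0 < q := hpq.symm.pos
  set δ := (p - 1) / p - γ with hδdef
  have hδ : 0 < δ := sub_pos.2 hγ
  set β := γ + δ / 2 with hβdef
  have hβlt : β < (p - 1) / p := by rw [hβdef, hδdef]; linarith
  have hq1 : q * (p - 1) = p := by rw [hqdef]; field_simp
  have hβq : β * q < 1 := by
    have h1 : β * q < ((p - 1) / p) * q := by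
      exact mul_lt_mul_of_pos_right hβlt hq0
    have h2 : ((p - 1) / p) * q = 1 := by rw [hqdef]; field_simp
    exact lt_of_lt_of_eq h1 h2
  set e2 := 1 - β * q with he2def
  have he2pos : 0 < e2 := by linarith
  set A := (γ - 1) * p + e2 * (p - 1) with hAdef
  have hA1 : A + 1 = -(δ / 2) * p := by
    have h3 : e2 * (p - 1) = (p - 1) - β * (q * (p - 1)) := by ring
    have hγβ : γ - β = -(δ / 2) := by rw [hβdef]; ring
    rw [hAdef, h3, hq1, ← hγβ]; ring
  have hAlt : A < -1 := by nlinarith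
  have hApos : 0 < -(A + 1) := by nlinarith
  have hkey : β * p + (A + 1) = γ * p := by
    have hγβ : γ - β = -(δ / 2) := by rw [hβdef]; ring
    rw [hA1, ← hγβ]; ring
  have hpq2 : (1 / q) * p = p - 1 := by
    rw [hqdef]; field_simp
  set K₂ := (1 / e2) ^ (p - 1) with hK₂def
  have hK₂pos : 0 < K₂ := Real.rpow_pos_of_pos (by positivity) _
  set K₃ := 1 / (-(A + 1)) with hK₃def
  have hK₃pos : 0 < K₃ := by positivity
  refine ⟨(K₂ * K₃) ^ (1 / p), Real.rpow_pos_of_pos (by positivity) _, ?_⟩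
  intro g hgc hgd hg'c hg0
  set D := deriv g with hDdef
  have hDm : Measurable D := measurable_deriv g
  have hDeq : ∀ t ∈ Ioi (0:ℝ), derivWithin g (Ici 0) t = D t := fun t ht =>
    derivWithin_of_mem_nhds (Ici_mem_nhds ht)
  set φ : ℝ → ℝ≥0∞ := fun t => ENNReal.ofReal (|D t| ^ p * t ^ (β * p)) with hφdef
  have hφm : Measurable φ := by
    apply ENNReal.measurable_ofReal.comp
    fun_prop
  set P : ℝ → ℝ≥0∞ := fun x => ∫⁻ t in Ioc (0:ℝ) x, φ t with hPdef
  set RHS : ℝ≥0∞ := ∫⁻ x in Ioi (0:ℝ), ENNReal.ofReal (|x ^ γ * D x| ^ p) with hRdef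
  -- rewrite RHS of goal using D
  have hRHSeq : (∫⁻ x in Ioi (0:ℝ),
      ENNReal.ofReal (|x ^ γ * derivWithin g (Ici 0) x| ^ p)) = RHS := by
    refine setLIntegral_congr_fun measurableSet_Ioi ?_
    intro x hx
    beta_reduce
    rw [hDeq x hx]
  -- pointwise Hölder bound
  have key1 : ∀ x ∈ Ioi (0:ℝ),
      ENNReal.ofReal (|x ^ (γ - 1) * g x| ^ p)
        ≤ ENNReal.ofReal K₂ * (ENNReal.ofReal (x ^ A) * P x) := by
    intro x hx
    have hx0 : (0:ℝ) < x := hx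
    have hftc := ftc_bound hgc hgd hg'c hg0 hx0
    have hHeq : (∫⁻ t in Ioc (0:ℝ) x, ENNReal.ofReal |derivWithin g (Ici 0) t|)
        = ∫⁻ t in Ioc (0:ℝ) x, ENNReal.ofReal |D t| := by
      refine setLIntegral_congr_fun measurableSet_Ioc ?_
      intro t ht
      beta_reduce
      rw [hDeq t ht.1]
    rw [hHeq] at hftc
    set f1 : ℝ → ℝ≥0∞ := fun t => ENNReal.ofReal (|D t| * t ^ β) with hf1
    set f2 : ℝ → ℝ≥0∞ := fun t => ENNReal.ofReal (t ^ (-β)) with hf2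
    have hf1m : AEMeasurable f1 (volume.restrict (Ioc 0 x)) := by fun_prop
    have hf2m : AEMeasurable f2 (volume.restrict (Ioc 0 x)) := by fun_prop
    have hold := ENNReal.lintegral_mul_le_Lp_mul_Lq (volume.restrict (Ioc 0 x)) hpq hf1m hf2m
    have hmul : ∫⁻ t in Ioc (0:ℝ) x, (f1 * f2) t
        = ∫⁻ t in Ioc (0:ℝ) x, ENNReal.ofReal |D t| := by
      refine setLIntegral_congr_fun measurableSet_Ioc ?_
      intro t ht
      beta_reduce
      have ht0 : (0:ℝ) < t := ht.1
      simp only [Pi.mul_apply, hf1, hf2]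
      rw [← ENNReal.ofReal_mul (by positivity)]
      congr 1
      rw [mul_assoc, ← Real.rpow_add ht0]
      simp
    have hfp : ∫⁻ t in Ioc (0:ℝ) x, f1 t ^ p = P x := by
      refine setLIntegral_congr_fun measurableSet_Ioc ?_
      intro t ht
      beta_reduce
      have ht0 : (0:ℝ) < t := ht.1
      rw [hf1, ENNReal.ofReal_rpow_of_nonneg (by positivity) hp0.le]
      congr 1
      rw [Real.mul_rpow (abs_nonneg _) (Real.rpow_nonneg ht0.le _), ← Real.rpow_mul ht0.le]
    have he2' : -(β * q) + 1 = e2 := by rw [he2def]; ring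
    have hfq : ∫⁻ t in Ioc (0:ℝ) x, f2 t ^ q = ENNReal.ofReal (x ^ e2 / e2) := by
      have heq : ∫⁻ t in Ioc (0:ℝ) x, f2 t ^ q
          = ∫⁻ t in Ioc (0:ℝ) x, ENNReal.ofReal (t ^ (-(β * q))) := by
        refine setLIntegral_congr_fun measurableSet_Ioc ?_
        intro t ht
        beta_reduce
        rw [hf2, ENNReal.ofReal_rpow_of_nonneg (Real.rpow_nonneg ht.1.le _) hq0.le,
          ← Real.rpow_mul ht.1.le, neg_mul]
      rw [heq, lint_Ioc_rpow (by linarith) hx0, he2']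
    have hgx : ENNReal.ofReal |g x|
        ≤ (P x) ^ (1/p) * (ENNReal.ofReal (x ^ e2 / e2)) ^ (1/q) := by
      calc ENNReal.ofReal |g x| ≤ ∫⁻ t in Ioc (0:ℝ) x, ENNReal.ofReal |D t| := hftc
        _ = ∫⁻ t in Ioc (0:ℝ) x, (f1 * f2) t := hmul.symm
        _ ≤ (∫⁻ t in Ioc (0:ℝ) x, f1 t ^ p) ^ (1/p)
            * (∫⁻ t in Ioc (0:ℝ) x, f2 t ^ q) ^ (1/q) := hold
        _ = (P x) ^ (1/p) * (ENNReal.ofReal (x ^ e2 / e2)) ^ (1/q) := by rw [hfp, hfq]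
    have h1 : |x ^ (γ - 1) * g x| ^ p = x ^ ((γ - 1) * p) * |g x| ^ p := by
      rw [abs_mul, abs_of_nonneg (Real.rpow_nonneg hx0.le _),
        Real.mul_rpow (Real.rpow_nonneg hx0.le _) (abs_nonneg _), ← Real.rpow_mul hx0.le]
    have hQp : (ENNReal.ofReal (x ^ e2 / e2)) ^ ((1/q) * p)
        = ENNReal.ofReal (x ^ (e2 * (p - 1))) * ENNReal.ofReal K₂ := by
      rw [hpq2, ENNReal.ofReal_rpow_of_nonneg (by positivity) (by linarith),
        ← ENNReal.ofReal_mul (by positivity)]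
      congr 1
      rw [div_eq_mul_one_div, Real.mul_rpow (Real.rpow_nonneg hx0.le _) (by positivity),
        ← Real.rpow_mul hx0.le, hK₂def]
    have hcomb : ENNReal.ofReal (x ^ ((γ - 1) * p)) * ENNReal.ofReal (x ^ (e2 * (p - 1)))
        = ENNReal.ofReal (x ^ A) := by
      rw [← ENNReal.ofReal_mul (Real.rpow_nonneg hx0.le _), ← Real.rpow_add hx0, hAdef]
    calc ENNReal.ofReal (|x ^ (γ - 1) * g x| ^ p)
        = ENNReal.ofReal (x ^ ((γ - 1) * p)) * ENNReal.ofReal |g x| ^ p := by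
          rw [h1, ENNReal.ofReal_mul (Real.rpow_nonneg hx0.le _),
            ← ENNReal.ofReal_rpow_of_nonneg (abs_nonneg _) hp0.le]
      _ ≤ ENNReal.ofReal (x ^ ((γ - 1) * p))
          * ((P x) ^ (1/p) * (ENNReal.ofReal (x ^ e2 / e2)) ^ (1/q)) ^ p :=
          mul_le_mul_right (ENNReal.rpow_le_rpow hgx hp0.le) _
      _ = ENNReal.ofReal (x ^ ((γ - 1) * p))
          * (P x * (ENNReal.ofReal (x ^ (e2 * (p - 1))) * ENNReal.ofReal K₂)) := by
          rw [ENNReal.mul_rpow_of_nonneg _ _ hp0.le, ← ENNReal.rpow_mul, ← ENNReal.rpow_mul,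
            one_div_mul_cancel hp0.ne', ENNReal.rpow_one, hQp]
      _ = ENNReal.ofReal (x ^ ((γ - 1) * p)) * ENNReal.ofReal (x ^ (e2 * (p - 1)))
          * ENNReal.ofReal K₂ * P x := by ring
      _ = ENNReal.ofReal K₂ * (ENNReal.ofReal (x ^ A) * P x) := by rw [hcomb]; ring
  -- integrate, Tonelli and conclude the unrooted inequality
  have main : (∫⁻ x in Ioi (0:ℝ), ENNReal.ofReal (|x ^ (γ - 1) * g x| ^ p))
      ≤ ENNReal.ofReal (K₂ * K₃) * RHS := by
    have hψm : Measurable (fun x : ℝ => ENNReal.ofReal (x ^ A)) := by fun_prop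
    have step1 : (∫⁻ x in Ioi (0:ℝ), ENNReal.ofReal (|x ^ (γ - 1) * g x| ^ p))
        ≤ ∫⁻ x in Ioi (0:ℝ), ENNReal.ofReal K₂ * (ENNReal.ofReal (x ^ A) * P x) :=
      lintegral_mono_ae ((ae_restrict_iff' measurableSet_Ioi).2
        (Filter.Eventually.of_forall key1))
    have step2 : (∫⁻ x in Ioi (0:ℝ), ENNReal.ofReal K₂ * (ENNReal.ofReal (x ^ A) * P x))
        = ENNReal.ofReal K₂ * ∫⁻ x in Ioi (0:ℝ), ENNReal.ofReal (x ^ A) * P x :=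
      lintegral_const_mul' _ _ ENNReal.ofReal_ne_top
    have step3 : (∫⁻ x in Ioi (0:ℝ), ENNReal.ofReal (x ^ A) * P x)
        = ∫⁻ t in Ioi (0:ℝ), φ t * ∫⁻ y in Ioi 0 ∩ Ici t, ENNReal.ofReal (y ^ A) :=
      tonelli_aux _ φ hψm hφm
    have step4 : (∫⁻ t in Ioi (0:ℝ), φ t * ∫⁻ y in Ioi 0 ∩ Ici t, ENNReal.ofReal (y ^ A))
        = ∫⁻ t in Ioi (0:ℝ), ENNReal.ofReal K₃ * ENNReal.ofReal (|t ^ γ * D t| ^ p) := by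
      refine setLIntegral_congr_fun measurableSet_Ioi ?_
      intro t ht
      beta_reduce
      have ht0 : (0:ℝ) < t := ht
      have hsub : Ici t ⊆ Ioi (0:ℝ) := fun y hy => lt_of_lt_of_le ht0 hy
      rw [Set.inter_eq_self_of_subset_right hsub]
      have h2 : (∫⁻ y in Ici t, ENNReal.ofReal (y ^ A))
          = ∫⁻ y in Ioi t, ENNReal.ofReal (y ^ A) := (setLIntegral_congr Ioi_ae_eq_Ici).symm
      rw [h2, lint_Ioi_rpow hAlt ht0, hφdef]
      have hrp : t ^ (β * p) * t ^ (A + 1) = t ^ (γ * p) := by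
        rw [← Real.rpow_add ht0, hkey]
      have habs : |t ^ γ * D t| ^ p = t ^ (γ * p) * |D t| ^ p := by
        rw [abs_mul, abs_of_nonneg (Real.rpow_nonneg ht0.le _),
          Real.mul_rpow (Real.rpow_nonneg ht0.le _) (abs_nonneg _), ← Real.rpow_mul ht0.le]
      rw [← ENNReal.ofReal_mul (by positivity), ← ENNReal.ofReal_mul hK₃pos.le]
      congr 1
      rw [habs, ← hrp, hK₃def]
      field_simp
    have step5 : (∫⁻ t in Ioi (0:ℝ), ENNReal.ofReal K₃ * ENNReal.ofReal (|t ^ γ * D t| ^ p))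
        = ENNReal.ofReal K₃ * RHS :=
      lintegral_const_mul' _ _ ENNReal.ofReal_ne_top
    calc (∫⁻ x in Ioi (0:ℝ), ENNReal.ofReal (|x ^ (γ - 1) * g x| ^ p))
        ≤ ENNReal.ofReal K₂ * (ENNReal.ofReal K₃ * RHS) := by
          rw [← step5, ← step4, ← step3, ← step2]; exact step1
      _ = ENNReal.ofReal (K₂ * K₃) * RHS := by
          rw [ENNReal.ofReal_mul hK₂pos.le, mul_assoc]
  -- take p-th roots
  calc (∫⁻ x in Ioi (0:ℝ), ENNReal.ofReal (|x ^ (γ - 1) * g x| ^ p)) ^ (1 / p)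
      ≤ (ENNReal.ofReal (K₂ * K₃) * RHS) ^ (1 / p) :=
        ENNReal.rpow_le_rpow main (by positivity)
    _ = ENNReal.ofReal ((K₂ * K₃) ^ (1 / p)) *
        (∫⁻ x in Ioi (0:ℝ),
          ENNReal.ofReal (|x ^ γ * derivWithin g (Ici 0) x| ^ p)) ^ (1 / p) := by
        rw [hRHSeq, ENNReal.mul_rpow_of_nonneg _ _ (by positivity),
          ← ENNReal.ofReal_rpow_of_nonneg (by positivity) (by positivity)]

/-- Weighted Hardy inequality (Kufner–Persson): for `p ∈ (1,∞)`, `γ < (p−1)/p` and `k ≥ 1`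
there is `C = C(k,p,γ) > 0` such that for every `f` of class `C^k` on `[0,∞)` with
`f(0) = ⋯ = f^(k−1)(0) = 0`,
`‖x^(γ−k) f‖_{L^p(0,∞)} ≤ C·‖x^γ f^(k)‖_{L^p(0,∞)}` (interpreted in `[0,∞]`). -/
theorem weighted_hardy_inequality (p γ : ℝ) (hp : 1 < p) (hγ : γ < (p - 1) / p)
    (k : ℕ) (hk : 1 ≤ k) :
    ∃ C > 0, ∀ f : ℝ → ℝ, ContDiffOn ℝ k f (Set.Ici 0) →
      (∀ j < k, iteratedDerivWithin j f (Set.Ici 0) 0 = 0) →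
      (∫⁻ x in Set.Ioi (0 : ℝ), ENNReal.ofReal (|x ^ (γ - k) * f x| ^ p)) ^ (1 / p)
        ≤ ENNReal.ofReal C *
          (∫⁻ x in Set.Ioi (0 : ℝ),
            ENNReal.ofReal (|x ^ γ * iteratedDerivWithin k f (Set.Ici 0) x| ^ p)) ^ (1 / p) := by
  induction k, hk using Nat.le_induction generalizing γ with
  | base =>
    obtain ⟨C, hC, hmain⟩ := hardy_base p γ hp hγ
    refine ⟨C, hC, ?_⟩
    intro f hf h0
    have hf1 : ContDiffOn ℝ 1 f (Ici 0) := by exact_mod_cast hf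
    have h00 : f 0 = 0 := by
      have h := h0 0 one_pos
      rwa [iteratedDerivWithin_zero] at h
    have key := hmain f hf1.continuousOn (hf1.differentiableOn one_ne_zero)
      (hf1.continuousOn_derivWithin (uniqueDiffOn_Ici 0) le_rfl) h00
    have e2 : (∫⁻ x in Ioi (0:ℝ),
        ENNReal.ofReal (|x ^ γ * iteratedDerivWithin 1 f (Ici 0) x| ^ p))
        = ∫⁻ x in Ioi (0:ℝ), ENNReal.ofReal (|x ^ γ * derivWithin f (Ici 0) x| ^ p) := by
      refine setLIntegral_congr_fun measurableSet_Ioi ?_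
      intro x hx
      beta_reduce
      rw [iteratedDerivWithin_one]
    simp only [Nat.cast_one]
    rw [e2]
    exact key
  | succ n hn ih =>
    obtain ⟨C₁, hC₁, ih1⟩ := ih (γ - 1) (by linarith)
    obtain ⟨C₂, hC₂, hb⟩ := hardy_base p γ hp hγ
    refine ⟨C₁ * C₂, mul_pos hC₁ hC₂, ?_⟩
    intro f hf h0
    have hfn : ContDiffOn ℝ n f (Ici 0) := hf.of_le (by exact_mod_cast Nat.le_succ n)
    have H1 := ih1 f hfn (fun j hj => h0 j (hj.trans (Nat.lt_succ_self n)))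
    set G := iteratedDerivWithin n f (Ici 0) with hGdef
    have hGc : ContinuousOn G (Ici 0) :=
      hf.continuousOn_iteratedDerivWithin (by exact_mod_cast Nat.le_succ n)
        (uniqueDiffOn_Ici 0)
    have hGd : DifferentiableOn ℝ G (Ici 0) :=
      hf.differentiableOn_iteratedDerivWithin (by exact_mod_cast Nat.lt_succ_self n)
        (uniqueDiffOn_Ici 0)
    have hG'eq : ∀ x ∈ Ici (0:ℝ), derivWithin G (Ici 0) x
        = iteratedDerivWithin (n+1) f (Ici 0) x :=
      fun x hx => (congrFun iteratedDerivWithin_succ x).symm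
    have hG'c : ContinuousOn (derivWithin G (Ici 0)) (Ici 0) :=
      (hf.continuousOn_iteratedDerivWithin (by exact_mod_cast le_refl (n+1))
        (uniqueDiffOn_Ici 0)).congr (fun x hx => hG'eq x hx)
    have hG0 : G 0 = 0 := h0 n (Nat.lt_succ_self n)
    have H2 := hb G hGc hGd hG'c hG0
    have e2 : (∫⁻ x in Ioi (0:ℝ), ENNReal.ofReal (|x ^ γ * derivWithin G (Ici 0) x| ^ p))
        = ∫⁻ x in Ioi (0:ℝ),
            ENNReal.ofReal (|x ^ γ * iteratedDerivWithin (n+1) f (Ici 0) x| ^ p) := by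
      refine setLIntegral_congr_fun measurableSet_Ioi ?_
      intro x hx
      beta_reduce
      rw [hG'eq x (Set.mem_Ici.2 (le_of_lt hx))]
    rw [e2] at H2
    have e1 : (∫⁻ x in Ioi (0:ℝ), ENNReal.ofReal (|x ^ (γ - ((n+1:ℕ):ℝ)) * f x| ^ p))
        = ∫⁻ x in Ioi (0:ℝ), ENNReal.ofReal (|x ^ (γ - 1 - (n:ℝ)) * f x| ^ p) := by
      have h : γ - ((n+1:ℕ):ℝ) = γ - 1 - (n:ℝ) := by push_cast; ring
      rw [h]
    calc (∫⁻ x in Ioi (0:ℝ), ENNReal.ofReal (|x ^ (γ - ((n+1:ℕ):ℝ)) * f x| ^ p)) ^ (1/p)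
        = (∫⁻ x in Ioi (0:ℝ), ENNReal.ofReal (|x ^ (γ - 1 - (n:ℝ)) * f x| ^ p)) ^ (1/p) := by
          rw [e1]
      _ ≤ ENNReal.ofReal C₁ *
          (∫⁻ x in Ioi (0:ℝ), ENNReal.ofReal (|x ^ (γ - 1) * G x| ^ p)) ^ (1/p) := H1
      _ ≤ ENNReal.ofReal C₁ * (ENNReal.ofReal C₂ *
          (∫⁻ x in Ioi (0:ℝ),
            ENNReal.ofReal (|x ^ γ * iteratedDerivWithin (n+1) f (Ici 0) x| ^ p)) ^ (1/p)) :=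
          mul_le_mul_right H2 _
      _ = ENNReal.ofReal (C₁ * C₂) *
          (∫⁻ x in Ioi (0:ℝ),
            ENNReal.ofReal (|x ^ γ * iteratedDerivWithin (n+1) f (Ici 0) x| ^ p)) ^ (1/p) := by
          rw [ENNReal.ofReal_mul hC₁.le, mul_assoc]
end

section
/- For every integer k ≥ 0 and every p ∈ (1, ∞) there exists a constant C = C(k, p) > 0 such that for every function f : [0, ∞) → ℝ of class C^(k+2), one has Σ_{j=0}^{k} ‖(d/dx)^j [ (f(x) − f(0) − x f'(0)) / x² ]‖_{L^p(0,∞)} ≤ C · Σ_{j=0}^{k} ‖f^(j+2)‖_{L^p(0,∞)}, where the inequality is interpreted in [0, ∞]. -/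
open MeasureTheory Set intervalIntegral

namespace IfAux

variable {f : ℝ → ℝ} {k : ℕ}

lemma contF (hf : ContDiffOn ℝ (k+2) f (Ici 0)) {n : ℕ} (hn : n ≤ k+2) :
    ContinuousOn (iteratedDerivWithin n f (Ici 0)) (Ici 0) :=
  hf.continuousOn_iteratedDerivWithin (by exact_mod_cast hn) (uniqueDiffOn_Ici 0)

lemma hasDerivF (hf : ContDiffOn ℝ (k+2) f (Ici 0)) {n : ℕ} (hn : n < k+2) {y : ℝ}
    (hy : 0 < y) :
    HasDerivAt (iteratedDerivWithin n f (Ici 0)) (iteratedDerivWithin (n+1) f (Ici 0) y) y := by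
  have h1 : DifferentiableOn ℝ (iteratedDerivWithin n f (Ici 0)) (Ici 0) :=
    hf.differentiableOn_iteratedDerivWithin (by exact_mod_cast hn) (uniqueDiffOn_Ici 0)
  have h2 := (h1 y (le_of_lt hy)).hasDerivWithinAt
  rw [iteratedDerivWithin_succ]
  exact h2.hasDerivAt (Ici_mem_nhds hy)

lemma contIcc (hf : ContDiffOn ℝ (k+2) f (Ici 0)) {n : ℕ} (hn : n ≤ k+2) {x : ℝ} (hx : 0 ≤ x) :
    ContinuousOn (iteratedDerivWithin n f (Ici 0)) (uIcc 0 x) :=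
  (contF hf hn).mono (by rw [uIcc_of_le hx]; exact Icc_subset_Ici_self)

lemma taylor1 (hf : ContDiffOn ℝ (k+2) f (Ici 0)) {x : ℝ} (hx : 0 < x) :
    ∫ y in (0:ℝ)..x, (x - y) * iteratedDerivWithin 2 f (Ici 0) y
      = f x - f 0 - x * derivWithin f (Ici 0) 0 := by
  have key := integral_eq_sub_of_hasDeriv_right_of_le (a := 0) (b := x)
    (f := fun y => f y + (x - y) * iteratedDerivWithin 1 f (Ici 0) y)
    (f' := fun y => (x - y) * iteratedDerivWithin 2 f (Ici 0) y)
    hx.le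
    (by
      apply ContinuousOn.add
      · exact (hf.continuousOn).mono (Icc_subset_Ici_self)
      · exact (continuousOn_const.sub continuousOn_id).mul
          ((contF hf (by omega)).mono Icc_subset_Ici_self))
    (by
      intro y hy
      have hF1 : HasDerivAt f (iteratedDerivWithin 1 f (Ici 0) y) y := by
        have := hasDerivF hf (n := 0) (by omega) hy.1
        simpa [iteratedDerivWithin_zero] using this
      have hF2 : HasDerivAt (iteratedDerivWithin 1 f (Ici 0))
          (iteratedDerivWithin 2 f (Ici 0) y) y := hasDerivF hf (n := 1) (by omega) hy.1
      have h := hF1.add ((((hasDerivAt_id y).const_sub x)).mul hF2)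
      have h' : HasDerivAt (fun y => f y + (x - y) * iteratedDerivWithin 1 f (Ici 0) y)
          ((x - y) * iteratedDerivWithin 2 f (Ici 0) y) y := by
        refine h.congr_deriv ?_; simp only [id_eq]; ring
      exact h'.hasDerivWithinAt)
    (((continuousOn_const.sub continuousOn_id).mul (contIcc hf (by omega) hx.le)).intervalIntegrable)
  rw [key]
  have h0 : iteratedDerivWithin 1 f (Ici 0) 0 = derivWithin f (Ici 0) 0 :=
    by rw [iteratedDerivWithin_one]
  simp only [h0]; ring

end IfAux

namespace IfAux
variable {f : ℝ → ℝ} {k : ℕ}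

lemma iiF (hf : ContDiffOn ℝ (k+2) f (Ici 0)) {n : ℕ} (hn : n ≤ k+2) {x : ℝ} (hx : 0 ≤ x)
    {c : ℝ → ℝ} (hc : Continuous c) :
    IntervalIntegrable (fun y => c y * iteratedDerivWithin n f (Ici 0) y) volume 0 x :=
  ((hc.continuousOn).mul (contIcc hf hn hx)).intervalIntegrable

lemma hasDerivAt_primitive (hf : ContDiffOn ℝ (k+2) f (Ici 0)) {n : ℕ} (hn : n ≤ k+2)
    (m : ℕ) {x : ℝ} (hx : 0 < x) :
    HasDerivAt (fun u => ∫ y in (0:ℝ)..u, y ^ m * iteratedDerivWithin n f (Ici 0) y)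
      (x ^ m * iteratedDerivWithin n f (Ici 0) x) x := by
  have hcont : ContinuousOn (fun y => y ^ m * iteratedDerivWithin n f (Ici 0) y) (Ici 0) :=
    (continuousOn_pow m).mul (contF hf hn)
  apply integral_hasDerivAt_right
  · exact (hcont.mono (by rw [uIcc_of_le hx.le]; exact Icc_subset_Ici_self)).intervalIntegrable
  · exact ContinuousOn.stronglyMeasurableAtFilter isOpen_Ioi (hcont.mono Ioi_subset_Ici_self) x hx
  · exact hcont.continuousAt (Ici_mem_nhds hx)

lemma ibp (hf : ContDiffOn ℝ (k+2) f (Ici 0)) {j : ℕ} (hj : j + 3 ≤ k + 2) {x : ℝ} (hx : 0 < x) :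
    ∫ y in (0:ℝ)..x, (x - y) * y ^ (j+1) * iteratedDerivWithin (j+3) f (Ici 0) y
      = (∫ y in (0:ℝ)..x, y ^ (j+1) * iteratedDerivWithin (j+2) f (Ici 0) y)
        - ((j:ℝ)+1) * ∫ y in (0:ℝ)..x, (x - y) * y ^ j * iteratedDerivWithin (j+2) f (Ici 0) y := by
  have hc1 : Continuous (fun y : ℝ => (x - y) * y ^ (j+1)) := by fun_prop
  have hc2 : Continuous (fun y : ℝ => ((j:ℝ)+1) * ((x - y) * y ^ j) - y ^ (j+1)) := by fun_prop
  have hc3 : Continuous (fun y : ℝ => (x - y) * y ^ j) := by fun_prop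
  have int1 : IntervalIntegrable
      (fun y => (x - y) * y ^ (j+1) * iteratedDerivWithin (j+3) f (Ici 0) y) volume 0 x :=
    iiF hf (by omega) hx.le hc1
  have int2 : IntervalIntegrable
      (fun y => (((j:ℝ)+1) * ((x - y) * y ^ j) - y ^ (j+1)) * iteratedDerivWithin (j+2) f (Ici 0) y)
      volume 0 x := iiF hf (by omega) hx.le hc2
  have int3 : IntervalIntegrable
      (fun y => (x - y) * y ^ j * iteratedDerivWithin (j+2) f (Ici 0) y) volume 0 x :=
    iiF hf (by omega) hx.le hc3
  have int4 : IntervalIntegrable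
      (fun y => y ^ (j+1) * iteratedDerivWithin (j+2) f (Ici 0) y) volume 0 x :=
    iiF hf (by omega) hx.le (by fun_prop)
  have key := integral_eq_sub_of_hasDeriv_right_of_le (a := 0) (b := x)
    (f := fun y => (x - y) * y ^ (j+1) * iteratedDerivWithin (j+2) f (Ici 0) y)
    (f' := fun y => (x - y) * y ^ (j+1) * iteratedDerivWithin (j+3) f (Ici 0) y
      + (((j:ℝ)+1) * ((x - y) * y ^ j) - y ^ (j+1)) * iteratedDerivWithin (j+2) f (Ici 0) y)
    hx.le
    (by exact (hc1.continuousOn).mul ((contF hf (by omega)).mono Icc_subset_Ici_self))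
    (by
      intro y hy
      have hd : HasDerivAt (fun y : ℝ => (x - y) * y ^ (j+1))
          ((-1) * y ^ (j+1) + (x - y) * (((j:ℝ)+1) * y ^ j)) y := by
        have := ((hasDerivAt_id y).const_sub x).mul (hasDerivAt_pow (j+1) y)
        refine this.congr_deriv ?_
        simp only [Nat.add_sub_cancel, id_eq]
        push_cast
        ring
      have hF := hasDerivF hf (n := j+2) (by omega) hy.1
      have h := hd.mul hF
      have h' : HasDerivAt (fun y => (x - y) * y ^ (j+1) * iteratedDerivWithin (j+2) f (Ici 0) y)
          ((x - y) * y ^ (j+1) * iteratedDerivWithin (j+3) f (Ici 0) y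
            + (((j:ℝ)+1) * ((x - y) * y ^ j) - y ^ (j+1)) * iteratedDerivWithin (j+2) f (Ici 0) y)
          y := by
        have : j + 2 + 1 = j + 3 := by omega
        refine h.congr_deriv ?_
        rw [this]; ring
      exact h'.hasDerivWithinAt)
    (int1.add int2)
  have hz : (∫ y in (0:ℝ)..x,
      ((x - y) * y ^ (j+1) * iteratedDerivWithin (j+3) f (Ici 0) y
        + (((j:ℝ)+1) * ((x - y) * y ^ j) - y ^ (j+1)) * iteratedDerivWithin (j+2) f (Ici 0) y)) = 0 := by
    rw [key]; simp
  rw [integral_add int1 int2] at hz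
  have hsplit : (∫ y in (0:ℝ)..x,
      (((j:ℝ)+1) * ((x - y) * y ^ j) - y ^ (j+1)) * iteratedDerivWithin (j+2) f (Ici 0) y)
      = ((j:ℝ)+1) * (∫ y in (0:ℝ)..x, (x - y) * y ^ j * iteratedDerivWithin (j+2) f (Ici 0) y)
        - ∫ y in (0:ℝ)..x, y ^ (j+1) * iteratedDerivWithin (j+2) f (Ici 0) y := by
    rw [← intervalIntegral.integral_const_mul, ← integral_sub (int3.const_mul _) int4]
    apply integral_congr
    intro y _
    ring
  rw [hsplit] at hz
  linarith

end IfAux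

namespace IfAux
variable {f : ℝ → ℝ} {k : ℕ}

theorem rep (hf : ContDiffOn ℝ (k+2) f (Ici 0)) :
    ∀ j, j ≤ k → ∀ x : ℝ, 0 < x →
    iteratedDerivWithin j (fun x => (f x - f 0 - x * derivWithin f (Ici 0) 0) / x ^ 2) (Ioi 0) x
      = (∫ y in (0:ℝ)..x, (x - y) * y ^ j * iteratedDerivWithin (j+2) f (Ici 0) y) / x ^ (j+2) := by
  intro j
  induction j with
  | zero =>
    intro _ x hx
    rw [iteratedDerivWithin_zero]
    have : (∫ y in (0:ℝ)..x, (x - y) * y ^ 0 * iteratedDerivWithin (0+2) f (Ici 0) y)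
        = ∫ y in (0:ℝ)..x, (x - y) * iteratedDerivWithin 2 f (Ici 0) y := by
      apply integral_congr; intro y _; simp
    rw [this, taylor1 hf hx]
  | succ j ih =>
    intro hj x hx
    have ihj := ih (by omega)
    rw [iteratedDerivWithin_succ]
    have heq : Set.EqOn
        (iteratedDerivWithin j (fun x => (f x - f 0 - x * derivWithin f (Ici 0) 0) / x ^ 2) (Ioi 0))
        (fun u => (∫ y in (0:ℝ)..u, (u - y) * y ^ j * iteratedDerivWithin (j+2) f (Ici 0) y)
          / u ^ (j+2)) (Ioi 0) := fun u hu => ihj u hu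
    rw [derivWithin_congr heq (ihj x hx)]
    rw [derivWithin_of_isOpen isOpen_Ioi (by exact hx)]
    apply HasDerivAt.deriv
    have hA := hasDerivAt_primitive hf (n := j+2) (by omega) j hx
    have hB := hasDerivAt_primitive hf (n := j+2) (by omega) (j+1) hx
    have hsplit : ∀ u : ℝ, 0 < u →
        (∫ y in (0:ℝ)..u, (u - y) * y ^ j * iteratedDerivWithin (j+2) f (Ici 0) y)
          = u * (∫ y in (0:ℝ)..u, y ^ j * iteratedDerivWithin (j+2) f (Ici 0) y)
            - ∫ y in (0:ℝ)..u, y ^ (j+1) * iteratedDerivWithin (j+2) f (Ici 0) y := by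
      intro u hu
      rw [← intervalIntegral.integral_const_mul, ← integral_sub ((iiF hf (by omega) hu.le (by fun_prop)).const_mul u)
        (iiF hf (by omega) hu.le (by fun_prop))]
      apply integral_congr; intro y _; ring
    have hH : HasDerivAt
        (fun u => ∫ y in (0:ℝ)..u, (u - y) * y ^ j * iteratedDerivWithin (j+2) f (Ici 0) y)
        (∫ y in (0:ℝ)..x, y ^ j * iteratedDerivWithin (j+2) f (Ici 0) y) x := by
      have h1 := ((hasDerivAt_id x).mul hA).sub hB
      have h2 : HasDerivAt
          (fun u => ∫ y in (0:ℝ)..u, (u - y) * y ^ j * iteratedDerivWithin (j+2) f (Ici 0) y)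
          (1 * (∫ y in (0:ℝ)..x, y ^ j * iteratedDerivWithin (j+2) f (Ici 0) y)
            + id x * (x ^ j * iteratedDerivWithin (j+2) f (Ici 0) x)
            - x ^ (j+1) * iteratedDerivWithin (j+2) f (Ici 0) x) x := by
        apply h1.congr_of_eventuallyEq
        filter_upwards [Ioi_mem_nhds hx] with u hu
        rw [hsplit u hu]; simp
      convert h2 using 1
      simp only [id_eq]; ring
    have hdiv := hH.div (hasDerivAt_pow (j+2) x) (pow_ne_zero _ hx.ne')
    refine hdiv.congr_deriv ?_
    rw [show j + 1 + 2 = j + 3 from rfl, show j + 1 + 2 = j + 3 from by omega]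
    rw [ibp hf (by omega) hx]
    have hx2 := hsplit x hx
    have hxj : x ^ (j+2) ≠ 0 := pow_ne_zero _ hx.ne'
    rw [hx2, show j + 2 - 1 = j + 1 from rfl]
    push_cast
    rw [div_eq_div_iff (by positivity) (by positivity)]
    ring


lemma lint_rpow_lt_top {r : ℝ} (hr : -1 < r) :
    (∫⁻ t in Ioo (0:ℝ) 1, ENNReal.ofReal (t ^ r)) < ⊤ := by
  have hint : IntegrableOn (fun t : ℝ => t ^ r) (Ioo 0 1) := by
    have h := intervalIntegrable_rpow' (a := 0) (b := 1) hr
    rw [intervalIntegrable_iff_integrableOn_Ioc_of_le zero_le_one] at h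
    exact h.mono_set Ioo_subset_Ioc_self
  have hnn : 0 ≤ᵐ[volume.restrict (Ioo (0:ℝ) 1)] fun t : ℝ => t ^ r := by
    filter_upwards [ae_restrict_mem measurableSet_Ioo] with t ht
    exact Real.rpow_nonneg ht.1.le r
  rw [← ofReal_integral_eq_lintegral_ofReal hint hnn]
  exact ENNReal.ofReal_lt_top

lemma scaling {t : ℝ} (ht : 0 < t) (h : ℝ → ENNReal) :
    (∫⁻ x in Ioi (0:ℝ), h (t * x)) = (ENNReal.ofReal t)⁻¹ * ∫⁻ y in Ioi (0:ℝ), h y := by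
  have hemb : MeasurableEmbedding (fun x : ℝ => t * x) :=
    (Homeomorph.mulLeft₀ t ht.ne').measurableEmbedding
  have hpre : (fun x : ℝ => t * x) ⁻¹' (Ioi 0) = Ioi 0 := by
    ext x
    simp only [mem_preimage, mem_Ioi]
    constructor
    · intro hx; nlinarith
    · intro hx; positivity
  have h1 : Measure.map (fun x : ℝ => t * x) (volume.restrict (Ioi 0))
      = (ENNReal.ofReal t)⁻¹ • volume.restrict (Ioi 0) := by
    conv_lhs => rw [← hpre]
    rw [← Measure.restrict_map hemb.measurable measurableSet_Ioi,
      Real.map_volume_mul_left ht.ne', Measure.restrict_smul,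
      abs_of_pos (inv_pos.mpr ht), ENNReal.ofReal_inv_of_pos ht]
  calc (∫⁻ x in Ioi (0:ℝ), h (t * x))
      = ∫⁻ y, h y ∂(Measure.map (fun x : ℝ => t * x) (volume.restrict (Ioi 0))) :=
        (hemb.lintegral_map h).symm
    _ = (ENNReal.ofReal t)⁻¹ * ∫⁻ y in Ioi (0:ℝ), h y := by
        rw [h1, lintegral_smul_measure, smul_eq_mul]

end IfAux

namespace IfAux

lemma cov (F : ℝ → ℝ) (j : ℕ) {x : ℝ} (hx : 0 < x) :
    (∫ y in (0:ℝ)..x, (x - y) * y ^ j * F y) / x ^ (j+2)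
      = ∫ t in (0:ℝ)..1, (1 - t) * t ^ j * F (t * x) := by
  have h := intervalIntegral.integral_comp_mul_right (a := 0) (b := 1)
    (fun y => (x - y) * y ^ j * F y) hx.ne'
  simp only [zero_mul, one_mul, smul_eq_mul] at h
  have h2 : (∫ t in (0:ℝ)..1, (fun y => (x - y) * y ^ j * F y) (t * x))
      = ∫ t in (0:ℝ)..1, x ^ (j+1) * ((1 - t) * t ^ j * F (t * x)) := by
    apply integral_congr
    intro t _
    simp only
    rw [mul_pow]
    ring
  rw [h2, intervalIntegral.integral_const_mul] at h
  have hxj : (x:ℝ) ^ (j+1) ≠ 0 := pow_ne_zero _ hx.ne'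
  field_simp at h ⊢
  rw [← h]
  ring

theorem est (p : ℝ) (hp : 1 < p) (j : ℕ) :
    ∃ D : ℝ, 0 < D ∧ ∀ F : ℝ → ℝ, ContinuousOn F (Ici 0) →
      (∫⁻ x in Ioi (0:ℝ),
          ENNReal.ofReal (|∫ t in (0:ℝ)..1, (1 - t) * t ^ j * F (t * x)| ^ p)) ^ (1/p)
        ≤ ENNReal.ofReal D * (∫⁻ x in Ioi (0:ℝ), ENNReal.ofReal (|F x| ^ p)) ^ (1/p) := by
  have hp0 : 0 < p := lt_trans one_pos hp
  set q : ℝ := p / (p - 1) with hq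
  have hpq : p.HolderConjugate q := Real.HolderConjugate.conjExponent hp
  have hq0 : 0 < q := hpq.symm.pos
  set a : ℝ := (p - 1) / (2 * p) with ha
  have ha0 : 0 < a := by
    apply div_pos <;> linarith
  have hp1 : p - 1 ≠ 0 := by linarith
  have hpne : p ≠ 0 := by linarith
  have haq : a * q = 1 / 2 := by
    rw [ha, hq, div_mul_div_comm, div_eq_div_iff (by positivity) (by norm_num)]
    ring
  have hjaq : -1 < ((j:ℝ) - a) * q := by
    have : ((j:ℝ) - a) * q = (j:ℝ) * q - 1/2 := by rw [← haq]; ring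
    rw [this]
    have : 0 ≤ (j:ℝ) * q := mul_nonneg (Nat.cast_nonneg j) hq0.le
    linarith
  have hap1 : -1 < a * p - 1 := by nlinarith
  set K : ENNReal := ∫⁻ t in Ioo (0:ℝ) 1, ENNReal.ofReal (t ^ (((j:ℝ) - a) * q)) with hK
  set L : ENNReal := ∫⁻ t in Ioo (0:ℝ) 1, ENNReal.ofReal (t ^ (a * p - 1)) with hL
  have hKfin : K ≠ ⊤ := (lint_rpow_lt_top hjaq).ne
  have hLfin : L ≠ ⊤ := (lint_rpow_lt_top hap1).ne
  have hKLfin : K ^ (1/q) * L ^ (1/p) ≠ ⊤ :=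
    ENNReal.mul_ne_top (ENNReal.rpow_ne_top_of_nonneg (by positivity) hKfin)
      (ENNReal.rpow_ne_top_of_nonneg (by positivity) hLfin)
  refine ⟨(K ^ (1/q) * L ^ (1/p)).toReal + 1, by positivity, ?_⟩
  intro F hF
  set N : ENNReal := ∫⁻ x in Ioi (0:ℝ), ENNReal.ofReal (|F x| ^ p) with hN
  by_cases hNtop : N = ⊤
  · rw [hNtop]
    rw [ENNReal.top_rpow_of_pos (by positivity)]
    rw [ENNReal.mul_top (by
      simp only [ne_eq, ENNReal.ofReal_eq_zero, not_le]
      positivity)]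
    exact le_top
  -- continuity helper
  have hFcomp : ∀ x : ℝ, 0 < x → ContinuousOn (fun t : ℝ => F (t * x)) (Icc 0 1) := by
    intro x hx
    apply hF.comp ((continuous_id.mul continuous_const).continuousOn)
    intro t ht
    exact mem_Ici.mpr (mul_nonneg ht.1 hx.le)
  -- pointwise bound
  have key : ∀ x ∈ Ioi (0:ℝ),
      ENNReal.ofReal (|∫ t in (0:ℝ)..1, (1 - t) * t ^ j * F (t * x)| ^ p)
        ≤ K ^ (p/q) * ∫⁻ t in Ioo (0:ℝ) 1, ENNReal.ofReal (t ^ (a*p) * |F (t * x)| ^ p) := by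
    intro x hx
    rw [mem_Ioi] at hx
    set w : ℝ → ℝ := fun t => (1 - t) * t ^ j * F (t * x) with hw
    have hwcont : ContinuousOn w (Icc 0 1) := by
      apply ContinuousOn.mul _ (hFcomp x hx)
      fun_prop
    have habs : |∫ t in (0:ℝ)..1, w t| ≤ ∫ t in (0:ℝ)..1, |w t| :=
      intervalIntegral.abs_integral_le_integral_abs zero_le_one
    have hint : IntegrableOn (fun t => |w t|) (Ioc 0 1) :=
      (hwcont.abs.integrableOn_Icc).mono_set Ioc_subset_Icc_self
    have h1 : ENNReal.ofReal |∫ t in (0:ℝ)..1, w t|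
        ≤ ∫⁻ t in Ioo (0:ℝ) 1, ENNReal.ofReal |w t| := by
      calc ENNReal.ofReal |∫ t in (0:ℝ)..1, w t|
          ≤ ENNReal.ofReal (∫ t in (0:ℝ)..1, |w t|) := ENNReal.ofReal_le_ofReal habs
        _ = ENNReal.ofReal (∫ t in Ioc (0:ℝ) 1, |w t|) := by
            rw [intervalIntegral.integral_of_le zero_le_one]
        _ = ∫⁻ t in Ioc (0:ℝ) 1, ENNReal.ofReal |w t| := by
            apply ofReal_integral_eq_lintegral_ofReal hint
            filter_upwards with t using abs_nonneg _
        _ = ∫⁻ t in Ioo (0:ℝ) 1, ENNReal.ofReal |w t| :=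
            (setLIntegral_congr (Ioo_ae_eq_Ioc (μ := volume) (a := (0:ℝ)) (b := 1))).symm
    have h2 : (∫⁻ t in Ioo (0:ℝ) 1, ENNReal.ofReal |w t|)
        ≤ ∫⁻ t in Ioo (0:ℝ) 1,
            ENNReal.ofReal (t ^ ((j:ℝ) - a)) * ENNReal.ofReal (t ^ a * |F (t * x)|) := by
      apply setLIntegral_mono' measurableSet_Ioo
      intro t ht
      rw [← ENNReal.ofReal_mul (Real.rpow_nonneg ht.1.le _)]
      apply ENNReal.ofReal_le_ofReal
      have htj : (t:ℝ) ^ (j:ℕ) = t ^ ((j:ℝ) - a) * t ^ a := by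
        rw [← Real.rpow_add ht.1, sub_add_cancel, Real.rpow_natCast]
      have hwabs : |w t| = (1 - t) * t ^ (j:ℕ) * |F (t * x)| := by
        rw [hw]
        simp only
        rw [abs_mul, abs_mul, abs_of_nonneg (by linarith [ht.2] : (0:ℝ) ≤ 1 - t),
          abs_of_nonneg (pow_nonneg ht.1.le j)]
      rw [hwabs]
      calc (1 - t) * t ^ (j:ℕ) * |F (t * x)| ≤ 1 * t ^ (j:ℕ) * |F (t * x)| := by
            apply mul_le_mul_of_nonneg_right _ (abs_nonneg _)
            apply mul_le_mul_of_nonneg_right _ (pow_nonneg ht.1.le j)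
            linarith [ht.1]
        _ = t ^ ((j:ℝ) - a) * (t ^ a * |F (t * x)|) := by rw [one_mul, htj]; ring
    -- Hölder
    have hrpowCont : ∀ c : ℝ, ContinuousOn (fun t : ℝ => t ^ c) (Ioo (0:ℝ) 1) :=
      fun c t ht => (Real.continuousAt_rpow_const t c (Or.inl ht.1.ne')).continuousWithinAt
    have hmeas1 : AEMeasurable (fun t : ℝ => ENNReal.ofReal (t ^ ((j:ℝ) - a)))
        (volume.restrict (Ioo (0:ℝ) 1)) :=
      (ENNReal.continuous_ofReal.comp_continuousOn (hrpowCont _)).aemeasurable measurableSet_Ioo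
    have hFIoo : ContinuousOn (fun t : ℝ => F (t * x)) (Ioo (0:ℝ) 1) :=
      (hFcomp x hx).mono Ioo_subset_Icc_self
    have hmeas2 : AEMeasurable (fun t : ℝ => ENNReal.ofReal (t ^ a * |F (t * x)|))
        (volume.restrict (Ioo (0:ℝ) 1)) :=
      (ENNReal.continuous_ofReal.comp_continuousOn
        ((hrpowCont a).mul hFIoo.abs)).aemeasurable measurableSet_Ioo
    have h3 := ENNReal.lintegral_mul_le_Lp_mul_Lq (volume.restrict (Ioo (0:ℝ) 1)) hpq.symm
      hmeas1 hmeas2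
    simp only [Pi.mul_apply] at h3
    have hKrw : (∫⁻ t in Ioo (0:ℝ) 1, (ENNReal.ofReal (t ^ ((j:ℝ) - a))) ^ q) = K := by
      rw [hK]
      apply setLIntegral_congr_fun measurableSet_Ioo
      intro t ht
      dsimp only
      rw [ENNReal.ofReal_rpow_of_nonneg (Real.rpow_nonneg ht.1.le _) hq0.le,
        ← Real.rpow_mul ht.1.le]
    have hMrw : (∫⁻ t in Ioo (0:ℝ) 1, (ENNReal.ofReal (t ^ a * |F (t * x)|)) ^ p)
        = ∫⁻ t in Ioo (0:ℝ) 1, ENNReal.ofReal (t ^ (a*p) * |F (t * x)| ^ p) := by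
      apply setLIntegral_congr_fun measurableSet_Ioo
      intro t ht
      dsimp only
      rw [ENNReal.ofReal_rpow_of_nonneg (mul_nonneg (Real.rpow_nonneg ht.1.le _) (abs_nonneg _))
        hp0.le, Real.mul_rpow (Real.rpow_nonneg ht.1.le _) (abs_nonneg _),
        ← Real.rpow_mul ht.1.le]
    rw [hKrw, hMrw] at h3
    have hchain : ENNReal.ofReal |∫ t in (0:ℝ)..1, w t|
        ≤ K ^ (1/q) *
          (∫⁻ t in Ioo (0:ℝ) 1, ENNReal.ofReal (t ^ (a*p) * |F (t * x)| ^ p)) ^ (1/p) :=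
      h1.trans (h2.trans h3)
    calc ENNReal.ofReal (|∫ t in (0:ℝ)..1, w t| ^ p)
        = (ENNReal.ofReal |∫ t in (0:ℝ)..1, w t|) ^ p :=
          (ENNReal.ofReal_rpow_of_nonneg (abs_nonneg _) hp0.le).symm
      _ ≤ (K ^ (1/q) *
            (∫⁻ t in Ioo (0:ℝ) 1, ENNReal.ofReal (t ^ (a*p) * |F (t * x)| ^ p)) ^ (1/p)) ^ p :=
          ENNReal.rpow_le_rpow hchain hp0.le
      _ = K ^ (p/q) * ∫⁻ t in Ioo (0:ℝ) 1, ENNReal.ofReal (t ^ (a*p) * |F (t * x)| ^ p) := by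
          rw [ENNReal.mul_rpow_of_nonneg _ _ hp0.le, ← ENNReal.rpow_mul, ← ENNReal.rpow_mul,
            show 1/q*p = p/q by ring, show 1/p*p = 1 by field_simp, ENNReal.rpow_one]
  -- Step 2: integrate in x, swap, scale
  have hKpq_ne_top : K ^ (p/q) ≠ ⊤ := ENNReal.rpow_ne_top_of_nonneg (by positivity) hKfin
  have hswap : (∫⁻ x in Ioi (0:ℝ), ∫⁻ t in Ioo (0:ℝ) 1,
        ENNReal.ofReal (t ^ (a*p) * |F (t * x)| ^ p))
      = ∫⁻ t in Ioo (0:ℝ) 1, ∫⁻ x in Ioi (0:ℝ),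
        ENNReal.ofReal (t ^ (a*p) * |F (t * x)| ^ p) := by
    apply lintegral_lintegral_swap
    rw [Measure.prod_restrict]
    apply ContinuousOn.aemeasurable _ (measurableSet_Ioi.prod measurableSet_Ioo)
    apply ENNReal.continuous_ofReal.comp_continuousOn
    apply ContinuousOn.mul
    · intro z hz
      exact ((Real.continuousAt_rpow_const z.2 _ (Or.inl hz.2.1.ne')).comp
        continuous_snd.continuousAt).continuousWithinAt
    · have hc1 : ContinuousOn (fun z : ℝ × ℝ => F (z.2 * z.1)) (Ioi (0:ℝ) ×ˢ Ioo (0:ℝ) 1) := by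
        apply hF.comp (continuous_snd.mul continuous_fst).continuousOn
        intro z hz
        exact le_of_lt (mul_pos hz.2.1 hz.1)
      exact hc1.abs.rpow_const (fun z _ => Or.inr hp0.le)
  have hin : ∀ t ∈ Ioo (0:ℝ) 1,
      (∫⁻ x in Ioi (0:ℝ), ENNReal.ofReal (t ^ (a*p) * |F (t * x)| ^ p))
        = ENNReal.ofReal (t ^ (a*p - 1)) * N := by
    intro t ht
    have hsplit : ∀ x : ℝ, ENNReal.ofReal (t ^ (a*p) * |F (t * x)| ^ p)
        = ENNReal.ofReal (t ^ (a*p)) * ENNReal.ofReal (|F (t * x)| ^ p) :=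
      fun x => ENNReal.ofReal_mul (Real.rpow_nonneg ht.1.le _)
    simp_rw [hsplit]
    rw [lintegral_const_mul' _ _ ENNReal.ofReal_ne_top,
      scaling ht.1 (fun y => ENNReal.ofReal (|F y| ^ p)), ← hN, ← mul_assoc]
    congr 1
    rw [← ENNReal.ofReal_inv_of_pos ht.1,
      ← ENNReal.ofReal_mul (Real.rpow_nonneg ht.1.le _),
      Real.rpow_sub ht.1, Real.rpow_one, div_eq_mul_inv]
  have hLN : (∫⁻ t in Ioo (0:ℝ) 1, ∫⁻ x in Ioi (0:ℝ),
      ENNReal.ofReal (t ^ (a*p) * |F (t * x)| ^ p)) = L * N := by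
    rw [setLIntegral_congr_fun measurableSet_Ioo (fun t ht => hin t ht)]
    rw [hL, lintegral_mul_const' N _ hNtop]
  have step2 : (∫⁻ x in Ioi (0:ℝ),
        ENNReal.ofReal (|∫ t in (0:ℝ)..1, (1 - t) * t ^ j * F (t * x)| ^ p))
      ≤ K ^ (p/q) * (L * N) := by
    calc (∫⁻ x in Ioi (0:ℝ),
          ENNReal.ofReal (|∫ t in (0:ℝ)..1, (1 - t) * t ^ j * F (t * x)| ^ p))
        ≤ ∫⁻ x in Ioi (0:ℝ), K ^ (p/q) * ∫⁻ t in Ioo (0:ℝ) 1,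
            ENNReal.ofReal (t ^ (a*p) * |F (t * x)| ^ p) :=
          setLIntegral_mono' measurableSet_Ioi key
      _ = K ^ (p/q) * ∫⁻ x in Ioi (0:ℝ), ∫⁻ t in Ioo (0:ℝ) 1,
            ENNReal.ofReal (t ^ (a*p) * |F (t * x)| ^ p) :=
          lintegral_const_mul' _ _ hKpq_ne_top
      _ = K ^ (p/q) * (L * N) := by rw [hswap, hLN]
  have hD : K ^ (1/q) * L ^ (1/p) ≤ ENNReal.ofReal ((K ^ (1/q) * L ^ (1/p)).toReal + 1) := by
    conv_lhs => rw [← ENNReal.ofReal_toReal hKLfin]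
    exact ENNReal.ofReal_le_ofReal (by linarith)
  calc (∫⁻ x in Ioi (0:ℝ),
        ENNReal.ofReal (|∫ t in (0:ℝ)..1, (1 - t) * t ^ j * F (t * x)| ^ p)) ^ (1/p)
      ≤ (K ^ (p/q) * (L * N)) ^ (1/p) := ENNReal.rpow_le_rpow step2 (by positivity)
    _ = K ^ (1/q) * L ^ (1/p) * N ^ (1/p) := by
        rw [ENNReal.mul_rpow_of_nonneg _ _ (by positivity : (0:ℝ) ≤ 1/p),
          ENNReal.mul_rpow_of_nonneg _ _ (by positivity : (0:ℝ) ≤ 1/p),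
          ← ENNReal.rpow_mul, show p/q*(1/p) = 1/q by field_simp, ← mul_assoc]
    _ ≤ ENNReal.ofReal ((K ^ (1/q) * L ^ (1/p)).toReal + 1) * N ^ (1/p) :=
        mul_le_mul_left hD _

end IfAux


open Set in
/-- Sobolev bound for `(If)' = (f(x) − f(0) − x f'(0))/x²`: for `k ≥ 0` and `p ∈ (1,∞)` there is
`C = C(k,p) > 0` such that for all `f` of class `C^(k+2)` on `[0,∞)`,
`Σ_{j=0}^k ‖(d/dx)^j [(f(x) − f(0) − x f'(0))/x²]‖_{L^p(0,∞)} ≤ C·Σ_{j=0}^k ‖f^(j+2)‖_{L^p(0,∞)}`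
(interpreted in `[0,∞]`). -/
theorem If_deriv_sobolev_bound (k : ℕ) (p : ℝ) (hp : 1 < p) :
    ∃ C > 0, ∀ f : ℝ → ℝ, ContDiffOn ℝ (k + 2) f (Set.Ici 0) →
      ∑ j ∈ Finset.range (k + 1),
          (∫⁻ x in Set.Ioi (0 : ℝ),
            ENNReal.ofReal
              (|iteratedDerivWithin j
                  (fun x => (f x - f 0 - x * derivWithin f (Set.Ici 0) 0) / x ^ 2)
                  (Set.Ioi 0) x| ^ p)) ^ (1 / p)
        ≤ ENNReal.ofReal C *
          ∑ j ∈ Finset.range (k + 1),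
            (∫⁻ x in Set.Ioi (0 : ℝ),
              ENNReal.ofReal (|iteratedDerivWithin (j + 2) f (Set.Ici 0) x| ^ p)) ^ (1 / p) := by
  classical
  choose D hDpos hDest using fun j : ℕ => IfAux.est p hp j
  set C : ℝ := (∑ j ∈ Finset.range (k + 1), D j) + 1 with hC
  have hCpos : 0 < C := by
    have : 0 ≤ ∑ j ∈ Finset.range (k + 1), D j :=
      Finset.sum_nonneg (fun i _ => (hDpos i).le)
    rw [hC]; linarith
  refine ⟨C, hCpos, ?_⟩
  intro f hf
  have hterm : ∀ j ∈ Finset.range (k + 1),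
      (∫⁻ x in Set.Ioi (0 : ℝ),
        ENNReal.ofReal
          (|iteratedDerivWithin j
              (fun x => (f x - f 0 - x * derivWithin f (Set.Ici 0) 0) / x ^ 2)
              (Set.Ioi 0) x| ^ p)) ^ (1 / p)
        ≤ ENNReal.ofReal C *
          (∫⁻ x in Set.Ioi (0 : ℝ),
            ENNReal.ofReal (|iteratedDerivWithin (j + 2) f (Set.Ici 0) x| ^ p)) ^ (1 / p) := by
    intro j hj
    rw [Finset.mem_range] at hj
    have hjk : j ≤ k := by omega
    have hFc : ContinuousOn (iteratedDerivWithin (j + 2) f (Ici 0)) (Ici 0) :=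
      IfAux.contF hf (by omega)
    have hcongr : (∫⁻ x in Set.Ioi (0 : ℝ),
        ENNReal.ofReal
          (|iteratedDerivWithin j
              (fun x => (f x - f 0 - x * derivWithin f (Set.Ici 0) 0) / x ^ 2)
              (Set.Ioi 0) x| ^ p))
        = ∫⁻ x in Set.Ioi (0 : ℝ),
            ENNReal.ofReal
              (|∫ t in (0:ℝ)..1, (1 - t) * t ^ j
                * iteratedDerivWithin (j + 2) f (Set.Ici 0) (t * x)| ^ p) := by
      apply MeasureTheory.setLIntegral_congr_fun measurableSet_Ioi
      intro x hx
      dsimp only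
      rw [IfAux.rep hf j hjk x hx, IfAux.cov _ j hx]
    rw [hcongr]
    refine le_trans (hDest j _ hFc) ?_
    apply mul_le_mul_left
    apply ENNReal.ofReal_le_ofReal
    have hle : D j ≤ ∑ i ∈ Finset.range (k + 1), D i :=
      Finset.single_le_sum (fun i _ => (hDpos i).le) (Finset.mem_range.mpr hj)
    rw [hC]; linarith
  calc ∑ j ∈ Finset.range (k + 1),
        (∫⁻ x in Set.Ioi (0 : ℝ),
          ENNReal.ofReal
            (|iteratedDerivWithin j
                (fun x => (f x - f 0 - x * derivWithin f (Set.Ici 0) 0) / x ^ 2)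
                (Set.Ioi 0) x| ^ p)) ^ (1 / p)
      ≤ ∑ j ∈ Finset.range (k + 1), ENNReal.ofReal C *
          (∫⁻ x in Set.Ioi (0 : ℝ),
            ENNReal.ofReal (|iteratedDerivWithin (j + 2) f (Set.Ici 0) x| ^ p)) ^ (1 / p) :=
        Finset.sum_le_sum hterm
    _ = ENNReal.ofReal C *
          ∑ j ∈ Finset.range (k + 1),
            (∫⁻ x in Set.Ioi (0 : ℝ),
              ENNReal.ofReal (|iteratedDerivWithin (j + 2) f (Set.Ici 0) x| ^ p)) ^ (1 / p) :=
        (Finset.mul_sum _ _ _).symm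
end

section
/- For every real r ≥ 1 and every t ∈ [0, 1), the following chain of inequalities holds: 2r·t^(2r−1)/(1 − t^(2r)) ≤ 2t/(1 − t²) ≤ 2r·t/(1 − t^(2r)) ≤ 2r·t^(2r−1)/(1 − t^(2r)) + 2r. -/
/-- Chain of kernel inequalities: for `r ≥ 1` and `t ∈ [0, 1)`,
`2r·t^(2r−1)/(1 − t^(2r)) ≤ 2t/(1 − t²) ≤ 2r·t/(1 − t^(2r)) ≤ 2r·t^(2r−1)/(1 − t^(2r)) + 2r`. -/
theorem kernel_inequalities (r t : ℝ) (hr : 1 ≤ r) (ht : t ∈ Set.Ico (0 : ℝ) 1) :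
    2 * r * t ^ (2 * r - 1) / (1 - t ^ (2 * r)) ≤ 2 * t / (1 - t ^ 2) ∧
    2 * t / (1 - t ^ 2) ≤ 2 * r * t / (1 - t ^ (2 * r)) ∧
    2 * r * t / (1 - t ^ (2 * r)) ≤ 2 * r * t ^ (2 * r - 1) / (1 - t ^ (2 * r)) + 2 * r := by
  obtain ⟨ht0, ht1⟩ := ht
  have hr0 : (0:ℝ) < r := by linarith
  have h2r : (0:ℝ) < 2 * r := by linarith
  have hrpos : t ^ (2 * r) < 1 := Real.rpow_lt_one ht0 ht1 h2r
  have hrnn : 0 ≤ t ^ (2 * r) := Real.rpow_nonneg ht0 _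
  have hd : 0 < 1 - t ^ (2 * r) := by linarith
  have hd2 : 0 < 1 - t ^ 2 := by nlinarith
  rcases eq_or_lt_of_le ht0 with h0 | h0
  · have hz1 : t ^ (2 * r) = 0 := by
      rw [← h0, Real.zero_rpow (by positivity)]
    have hz2 : t ^ (2 * r - 1) = 0 := by
      rw [← h0, Real.zero_rpow (by intro h; nlinarith)]
    rw [hz1, hz2, ← h0]
    norm_num
    linarith
  -- t > 0 case
  have key1 : t ^ (2 * r) = t ^ (2 * r - 1) * t := by
    rw [show (2 * r) = (2 * r - 1) + 1 by ring, Real.rpow_add h0, Real.rpow_one]; ring_nf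
  have ht2 : t ^ ((2:ℝ)) = t ^ 2 := by
    rw [show ((2:ℝ)) = ((2:ℕ):ℝ) by norm_num, Real.rpow_natCast]
  have key2 : t ^ (2 * r) = t ^ (2 * r - 2) * t ^ 2 := by
    rw [show (2 * r) = (2 * r - 2) + 2 by ring, Real.rpow_add h0, ht2]; ring_nf
  have keyA : t ^ (2 * r - 1) = t * t ^ (2 * r - 2) := by
    have : t ^ (2 * r - 1) * t = (t * t ^ (2 * r - 2)) * t := by
      rw [← key1, key2]; ring
    exact mul_right_cancel₀ h0.ne' this
  have hs : (0:ℝ) < t ^ 2 := by positivity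
  have hts : (t ^ 2 : ℝ) ^ r = t ^ (2 * r) := by
    rw [← ht2, ← Real.rpow_mul ht0]
  have htr0 : (0:ℝ) < t ^ (2 * r) := Real.rpow_pos_of_pos h0 _
  have hAnn : 0 ≤ t ^ (2 * r - 2) := Real.rpow_nonneg ht0 _
  have hA1nn : 0 ≤ t ^ (2 * r - 1) := Real.rpow_nonneg ht0 _
  -- Bernoulli at t^2
  have bern2 : 1 - t ^ (2 * r) ≤ r * (1 - t ^ 2) := by
    have h := one_add_mul_self_le_rpow_one_add (s := t ^ 2 - 1) (by nlinarith) hr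
    rw [show (1 + (t ^ 2 - 1)) = (t ^ 2 : ℝ) by ring, hts] at h
    nlinarith
  -- Bernoulli at 1/t^2, multiplied by t^(2r)
  have hinv : (1:ℝ) ≤ 1 / t ^ 2 := by rw [le_div_iff₀ hs]; nlinarith
  have hinvr : (1 / t ^ 2 : ℝ) ^ r = 1 / t ^ (2 * r) := by
    rw [Real.div_rpow (by norm_num) hs.le, Real.one_rpow, hts]
  have bern1 : 1 + r * (1 / t ^ 2 - 1) ≤ 1 / t ^ (2 * r) := by
    have h := one_add_mul_self_le_rpow_one_add (s := 1 / t ^ 2 - 1) (by linarith) hr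
    rw [show (1 + (1 / t ^ 2 - 1)) = (1 / t ^ 2 : ℝ) by ring, hinvr] at h
    exact h
  have hB : r * (t ^ (2 * r - 2) - t ^ (2 * r)) ≤ 1 - t ^ (2 * r) := by
    have h := mul_le_mul_of_nonneg_left bern1 htr0.le
    have hRHS : t ^ (2 * r) * (1 / t ^ (2 * r)) = 1 := by field_simp
    have hLHS : t ^ (2 * r) * (1 + r * (1 / t ^ 2 - 1))
        = t ^ (2 * r) + r * (t ^ (2 * r - 2) - t ^ (2 * r)) := by
      rw [key2]; field_simp
    rw [hRHS, hLHS] at h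
    linarith
  refine ⟨?_, ?_, ?_⟩
  · rw [div_le_div_iff₀ hd hd2]
    have hBA : r * t ^ (2 * r - 2) * (1 - t ^ 2) ≤ 1 - t ^ (2 * r) := by
      nlinarith [key2]
    have := mul_le_mul_of_nonneg_left hBA (by linarith : (0:ℝ) ≤ 2 * t)
    nlinarith [keyA]
  · rw [div_le_div_iff₀ hd2 hd]
    nlinarith [mul_le_mul_of_nonneg_left bern2 (by linarith : (0:ℝ) ≤ 2 * t)]
  · have h3 : 2 * r * t ≤ 2 * r * t ^ (2 * r - 1) + 2 * r * (1 - t ^ (2 * r)) := by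
      have ht21 : t ^ (2 * r) ≤ t ^ (2 * r - 1) := by
        rw [key1]; nlinarith
      nlinarith
    calc 2 * r * t / (1 - t ^ (2 * r))
        ≤ (2 * r * t ^ (2 * r - 1) + 2 * r * (1 - t ^ (2 * r))) / (1 - t ^ (2 * r)) := by
          gcongr
      _ = 2 * r * t ^ (2 * r - 1) / (1 - t ^ (2 * r)) + 2 * r := by
          field_simp
end

section
/- For every real r ≥ 1, the function t ↦ (2t/(1 − t²) − 2r·t^(2r−1)/(1 − t^(2r)))·t^(−1/2) is nonnegative on (0, ∞) \ {1}, and its Lebesgue integral over (0, ∞) satisfies ∫₀^∞ (2t/(1 − t²) − 2r·t^(2r−1)/(1 − t^(2r)))·t^(−1/2) dt ≤ (20√2/3)·r. -/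
open MeasureTheory

lemma kernel_key (r t : ℝ) (hr : 1 ≤ r) (ht : 0 < t) (ht1 : t ≠ 1) :
    0 ≤ 2 * t / (1 - t ^ 2) - 2 * r * t ^ (2 * r - 1) / (1 - t ^ (2 * r)) ∧
    2 * t / (1 - t ^ 2) - 2 * r * t ^ (2 * r - 1) / (1 - t ^ (2 * r)) ≤ (2 * r - 2) / t := by
  set A := t ^ (2 * r) with hA
  set B := t ^ (2 * r - 1) with hB
  have hApos : 0 < A := Real.rpow_pos_of_pos ht _
  have hBpos : 0 < B := Real.rpow_pos_of_pos ht _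
  have hBA : B * t = A := by
    have h : t ^ (2*r-1) * t ^ (1:ℝ) = t ^ (2*r-1+1) := (Real.rpow_add ht _ _).symm
    rw [hA, hB]
    simpa [Real.rpow_one, show 2*r-1+1 = 2*r by ring] using h
  have hA2 : (t ^ 2 : ℝ) ^ r = A := by
    rw [hA, ← Real.rpow_natCast t 2, ← Real.rpow_mul ht.le]
    norm_num
  -- Bernoulli at t^2
  have hK1 : 1 + r * (t ^ 2 - 1) ≤ A := by
    have h := one_add_mul_self_le_rpow_one_add (s := t ^ 2 - 1) (by nlinarith) hr
    have e : 1 + (t ^ 2 - 1) = t ^ 2 := by ring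
    rwa [e, hA2] at h
  -- Bernoulli at t⁻², in cleared form
  have hK2 : (t ^ 2 + r - r * t ^ 2) * B ≤ t := by
    have hinv : (0:ℝ) < (t ^ 2)⁻¹ := by positivity
    have h := one_add_mul_self_le_rpow_one_add (s := (t ^ 2)⁻¹ - 1) (by linarith) hr
    have e : 1 + ((t ^ 2)⁻¹ - 1) = (t ^ 2)⁻¹ := by ring
    rw [e, Real.inv_rpow (by positivity), hA2] at h
    -- h : 1 + r * ((t ^ 2)⁻¹ - 1) ≤ A⁻¹
    have h2 := mul_le_mul_of_nonneg_right h (le_of_lt (mul_pos hApos (mul_pos ht ht)))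
    have e1 : (1 + r * ((t ^ 2)⁻¹ - 1)) * (A * (t * t)) = ((t ^ 2 + r - r * t ^ 2) * A) / t * t := by
      field_simp
      ring
    have e2 : A⁻¹ * (A * (t * t)) = t ^ 2 := by
      field_simp
    rw [e1, e2, div_mul_cancel₀ _ (ne_of_gt ht)] at h2
    have h3 : (t ^ 2 + r - r * t ^ 2) * A ≤ t ^ 2 := h2
    calc (t ^ 2 + r - r * t ^ 2) * B = ((t ^ 2 + r - r * t ^ 2) * A) / t := by
          rw [← hBA]; field_simp
      _ ≤ t := by rw [div_le_iff₀ ht]; nlinarith [h3]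
  -- sign of denominators
  have hd : 0 < (1 - t ^ 2) * (1 - A) := by
    rcases lt_or_gt_of_ne ht1 with hlt | hgt
    · have h1 : 0 < 1 - t ^ 2 := by nlinarith
      have h2 : A < 1 := Real.rpow_lt_one ht.le hlt (by linarith)
      exact mul_pos h1 (by linarith)
    · have h1 : 1 - t ^ 2 < 0 := by nlinarith
      have h2 : 1 < A := Real.one_lt_rpow_iff_of_pos ht |>.2 (Or.inl ⟨hgt, by linarith⟩)
      exact mul_pos_of_neg_of_neg h1 (by linarith)
  have hne1 : (1 - t ^ 2) ≠ 0 := left_ne_zero_of_mul (ne_of_gt hd)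
  have hne2 : (1 - A) ≠ 0 := right_ne_zero_of_mul (ne_of_gt hd)
  have heq : 2 * t / (1 - t ^ 2) - 2 * r * B / (1 - A)
      = (2 * t * (1 - A) - 2 * r * B * (1 - t ^ 2)) / ((1 - t ^ 2) * (1 - A)) := by
    field_simp
  have hnum : 0 ≤ 2 * t * (1 - A) - 2 * r * B * (1 - t ^ 2) := by
    rw [← hBA]
    nlinarith [hK2]
  constructor
  · rw [heq]; exact div_nonneg hnum hd.le
  · rw [heq, div_le_div_iff₀ hd ht]
    have e3 : (2 * t * (1 - A) - 2 * r * B * (1 - t ^ 2)) * t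
        = 2 * t ^ 2 * (1 - A) - 2 * r * A * (1 - t ^ 2) := by
      linear_combination (-(2 * r) * (1 - t ^ 2)) * hBA
    rw [e3]
    nlinarith [hK1]

-- value lemmas for rpow of 1/2
lemma half_rpow_three_half : ((1/2 : ℝ)) ^ ((3:ℝ)/2) = Real.sqrt 2 / 4 := by
  have s2 : Real.sqrt 2 * Real.sqrt 2 = 2 := Real.mul_self_sqrt (by norm_num)
  have h1 : ((1/2 : ℝ)) ^ ((1:ℝ)/2) = (Real.sqrt 2)⁻¹ := by
    rw [← Real.sqrt_eq_rpow, show (1/2 : ℝ) = 2⁻¹ by norm_num, Real.sqrt_inv]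
  have h2 : ((1/2 : ℝ)) ^ ((3:ℝ)/2) = ((1/2 : ℝ)) ^ (1:ℝ) * ((1/2 : ℝ)) ^ ((1:ℝ)/2) := by
    rw [← Real.rpow_add (by norm_num)]; norm_num
  rw [h2, h1, Real.rpow_one]
  have hs : (0:ℝ) < Real.sqrt 2 := Real.sqrt_pos.2 (by norm_num)
  field_simp
  nlinarith [s2]

lemma half_rpow_neg_half : ((1/2 : ℝ)) ^ (-(1:ℝ)/2) = Real.sqrt 2 := by
  have h1 : ((1/2 : ℝ)) ^ ((1:ℝ)/2) = (Real.sqrt 2)⁻¹ := by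
    rw [← Real.sqrt_eq_rpow, show (1/2 : ℝ) = 2⁻¹ by norm_num, Real.sqrt_inv]
  rw [show (-(1:ℝ)/2) = -((1:ℝ)/2) by norm_num, Real.rpow_neg (by norm_num), h1, inv_inv]

/-- For `r ≥ 1`, the kernel difference `(2t/(1−t²) − 2r·t^(2r−1)/(1−t^(2r)))·t^(−1/2)` is
nonnegative on `(0, ∞) \ {1}` and its Lebesgue integral over `(0, ∞)` is at most `(20√2/3)·r`. -/
theorem kernel_integral_bound_L2 (r : ℝ) (hr : 1 ≤ r) :
    (∀ t ∈ Set.Ioi (0 : ℝ), t ≠ 1 →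
      0 ≤ (2 * t / (1 - t ^ 2) - 2 * r * t ^ (2 * r - 1) / (1 - t ^ (2 * r))) * t ^ (-(1/2) : ℝ)) ∧
    ∫⁻ t in Set.Ioi (0 : ℝ),
        ENNReal.ofReal
          ((2 * t / (1 - t ^ 2) - 2 * r * t ^ (2 * r - 1) / (1 - t ^ (2 * r))) * t ^ (-(1/2) : ℝ))
      ≤ ENNReal.ofReal (20 * Real.sqrt 2 / 3 * r) := by
  constructor
  · intro t ht ht1
    exact mul_nonneg (kernel_key r t hr ht ht1).1 (Real.rpow_nonneg (le_of_lt ht) _)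
  have hsplit : Set.Ioc (0:ℝ) (1/2) ∪ Set.Ioi (1/2 : ℝ) = Set.Ioi (0:ℝ) :=
    Set.Ioc_union_Ioi_eq_Ioi (by norm_num)
  -- pointwise bound on Ioc 0 (1/2)
  have hb1 : ∀ t ∈ Set.Ioc (0:ℝ) (1/2),
      ENNReal.ofReal
          ((2 * t / (1 - t ^ 2) - 2 * r * t ^ (2 * r - 1) / (1 - t ^ (2 * r))) * t ^ (-(1/2) : ℝ))
        ≤ ENNReal.ofReal (8/3 * t ^ ((1:ℝ)/2)) := by
    intro t ht
    have ht0 : 0 < t := ht.1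
    have htle : t ≤ 1/2 := ht.2
    apply ENNReal.ofReal_le_ofReal
    have h1 : 0 < 1 - t ^ 2 := by nlinarith
    have hA : t ^ (2*r) < 1 := Real.rpow_lt_one ht0.le (by linarith) (by linarith)
    have hQ : 0 ≤ 2 * r * t ^ (2*r-1) / (1 - t ^ (2*r)) := by
      apply div_nonneg _ (by linarith)
      have := Real.rpow_nonneg ht0.le (2*r-1)
      nlinarith
    have hbr : 2 * t / (1 - t ^ 2) - 2 * r * t ^ (2*r-1) / (1 - t ^ (2*r)) ≤ 8/3 * t := by
      have h2 : 2 * t / (1 - t ^ 2) ≤ 8/3 * t := by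
        rw [div_le_iff₀ h1]; nlinarith
      linarith
    calc (2 * t / (1 - t ^ 2) - 2 * r * t ^ (2*r-1) / (1 - t ^ (2*r))) * t ^ (-(1/2) : ℝ)
        ≤ (8/3 * t) * t ^ (-(1/2) : ℝ) :=
          mul_le_mul_of_nonneg_right hbr (Real.rpow_nonneg ht0.le _)
      _ = 8/3 * t ^ ((1:ℝ)/2) := by
          have h := (Real.rpow_add ht0 1 (-(1/2))).symm
          rw [Real.rpow_one] at h
          rw [mul_assoc, h]; norm_num
  -- pointwise bound on Ioi (1/2)
  have hb2 : ∀ t ∈ Set.Ioi (1/2 : ℝ),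
      ENNReal.ofReal
          ((2 * t / (1 - t ^ 2) - 2 * r * t ^ (2 * r - 1) / (1 - t ^ (2 * r))) * t ^ (-(1/2) : ℝ))
        ≤ ENNReal.ofReal ((2*r-2) * t ^ (-(3:ℝ)/2)) := by
    intro t ht
    have ht0 : (0:ℝ) < t := lt_trans (by norm_num) ht
    by_cases ht1 : t = 1
    · subst ht1
      simp [Real.one_rpow]
    · apply ENNReal.ofReal_le_ofReal
      calc (2 * t / (1 - t ^ 2) - 2 * r * t ^ (2*r-1) / (1 - t ^ (2*r))) * t ^ (-(1/2) : ℝ)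
          ≤ ((2*r-2)/t) * t ^ (-(1/2) : ℝ) :=
            mul_le_mul_of_nonneg_right (kernel_key r t hr ht0 ht1).2 (Real.rpow_nonneg ht0.le _)
        _ = (2*r-2) * t ^ (-(3:ℝ)/2) := by
            rw [div_eq_mul_inv, ← Real.rpow_neg_one t, mul_assoc, ← Real.rpow_add ht0]
            norm_num
  -- integrals of the bounding functions
  have hI1 : ∫⁻ t in Set.Ioc (0:ℝ) (1/2), ENNReal.ofReal (8/3 * t ^ ((1:ℝ)/2))
      = ENNReal.ofReal (Real.sqrt 2 * 4 / 9) := by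
    have hint : IntegrableOn (fun t : ℝ => 8/3 * t ^ ((1:ℝ)/2)) (Set.Ioc 0 (1/2)) := by
      have h := (intervalIntegral.intervalIntegrable_rpow' (a := 0) (b := 1/2)
        (r := (1:ℝ)/2) (by norm_num))
      exact ((intervalIntegrable_iff_integrableOn_Ioc_of_le (by norm_num)).1 h).const_mul _
    have hnn : 0 ≤ᵐ[volume.restrict (Set.Ioc (0:ℝ) (1/2))]
        fun t : ℝ => 8/3 * t ^ ((1:ℝ)/2) := by
      refine (ae_restrict_iff' measurableSet_Ioc).2 (Filter.Eventually.of_forall fun t ht => ?_)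
      have := Real.rpow_nonneg ht.1.le ((1:ℝ)/2)
      positivity
    rw [← ofReal_integral_eq_lintegral_ofReal hint hnn]
    congr 1
    rw [← intervalIntegral.integral_of_le (by norm_num : (0:ℝ) ≤ 1/2),
      intervalIntegral.integral_const_mul, integral_rpow (Or.inl (by norm_num))]
    rw [show (1:ℝ)/2 + 1 = (3:ℝ)/2 by norm_num, Real.zero_rpow (by norm_num), half_rpow_three_half]
    ring
  have hI2 : ∫⁻ t in Set.Ioi (1/2 : ℝ), ENNReal.ofReal ((2*r-2) * t ^ (-(3:ℝ)/2))
      = ENNReal.ofReal ((2*r-2) * (2 * Real.sqrt 2)) := by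
    have hint : IntegrableOn (fun t : ℝ => (2*r-2) * t ^ (-(3:ℝ)/2)) (Set.Ioi (1/2 : ℝ)) :=
      (integrableOn_Ioi_rpow_of_lt (by norm_num) (by norm_num)).const_mul _
    have hnn : 0 ≤ᵐ[volume.restrict (Set.Ioi (1/2:ℝ))]
        fun t : ℝ => (2*r-2) * t ^ (-(3:ℝ)/2) := by
      refine (ae_restrict_iff' measurableSet_Ioi).2 (Filter.Eventually.of_forall fun t ht => ?_)
      have ht0 : (0:ℝ) < t := lt_trans (by norm_num) ht
      exact mul_nonneg (by linarith) (Real.rpow_nonneg ht0.le _)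
    rw [← ofReal_integral_eq_lintegral_ofReal hint hnn]
    congr 1
    rw [integral_const_mul, integral_Ioi_rpow_of_lt (by norm_num) (by norm_num)]
    rw [show (-(3:ℝ)/2 + 1) = -(1:ℝ)/2 by norm_num, half_rpow_neg_half]
    ring
  calc ∫⁻ t in Set.Ioi (0:ℝ),
        ENNReal.ofReal
          ((2 * t / (1 - t ^ 2) - 2 * r * t ^ (2 * r - 1) / (1 - t ^ (2 * r))) * t ^ (-(1/2) : ℝ))
      = ∫⁻ t in Set.Ioc (0:ℝ) (1/2) ∪ Set.Ioi (1/2 : ℝ),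
        ENNReal.ofReal
          ((2 * t / (1 - t ^ 2) - 2 * r * t ^ (2 * r - 1) / (1 - t ^ (2 * r))) * t ^ (-(1/2) : ℝ)) := by
        rw [hsplit]
    _ ≤ (∫⁻ t in Set.Ioc (0:ℝ) (1/2),
          ENNReal.ofReal
            ((2 * t / (1 - t ^ 2) - 2 * r * t ^ (2 * r - 1) / (1 - t ^ (2 * r))) * t ^ (-(1/2) : ℝ)))
        + ∫⁻ t in Set.Ioi (1/2 : ℝ),
          ENNReal.ofReal
            ((2 * t / (1 - t ^ 2) - 2 * r * t ^ (2 * r - 1) / (1 - t ^ (2 * r))) * t ^ (-(1/2) : ℝ)) :=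
        lintegral_union_le _ _ _
    _ ≤ (∫⁻ t in Set.Ioc (0:ℝ) (1/2), ENNReal.ofReal (8/3 * t ^ ((1:ℝ)/2)))
        + ∫⁻ t in Set.Ioi (1/2 : ℝ), ENNReal.ofReal ((2*r-2) * t ^ (-(3:ℝ)/2)) := by
        exact add_le_add (setLIntegral_mono' measurableSet_Ioc hb1)
          (setLIntegral_mono' measurableSet_Ioi hb2)
    _ = ENNReal.ofReal (Real.sqrt 2 * 4 / 9) + ENNReal.ofReal ((2*r-2) * (2 * Real.sqrt 2)) := by
        rw [hI1, hI2]
    _ ≤ ENNReal.ofReal (20 * Real.sqrt 2 / 3 * r) := by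
        rw [← ENNReal.ofReal_add (by positivity) (by nlinarith [Real.sqrt_nonneg 2])]
        apply ENNReal.ofReal_le_ofReal
        nlinarith [Real.sqrt_nonneg 2, mul_nonneg (Real.sqrt_nonneg 2) (by linarith : (0:ℝ) ≤ r - 1)]
end

section
/- There is a constant C = 20√2/3 such that for every real r ≥ 1 and every f ∈ L²((0, ∞)), the function g(x) = ∫₀^∞ (2t/(1 − t²) − 2r·t^(2r−1)/(1 − t^(2r)))·|f(t·x)| dt (defined for x > 0) satisfies ‖g‖_{L²(0,∞)} ≤ C·r·‖f‖_{L²(0,∞)}. -/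
open MeasureTheory
open scoped ENNReal

section HrAux
open Real MeasureTheory Set

noncomputable def Kker (r t : ℝ) : ℝ :=
  2 * t / (1 - t ^ 2) - 2 * r * t ^ (2 * r - 1) / (1 - t ^ (2 * r))

lemma kker_meas (r : ℝ) : Measurable (Kker r) := by unfold Kker; fun_prop

lemma bern' {r t : ℝ} (hr : 1 ≤ r) (ht : 0 < t) : 1 + r * (t ^ 2 - 1) ≤ t ^ (2 * r) := by
  have h := one_add_mul_self_le_rpow_one_add (s := t ^ 2 - 1) (by nlinarith [sq_nonneg t]) hr
  rw [add_sub_cancel, ← rpow_natCast t 2, ← rpow_mul ht.le] at h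
  norm_num at h
  exact h

lemma kpow {r t : ℝ} (ht : 0 < t) : t ^ (2 * r - 1) = t ^ (2 * r) / t := by
  rw [rpow_sub ht, rpow_one]

lemma kmid {r t : ℝ} (hr : 1 ≤ r) (ht : 0 < t) : Kker r t ≤ 2 * (r - 1) / t := by
  have hr0 : (0:ℝ) ≤ 2 * (r - 1) / t := div_nonneg (by linarith) ht.le
  have main : ∀ p : ℝ, 0 < p → 1 + r * (t ^ 2 - 1) ≤ p → (1 - t ^ 2) * (1 - p) > 0 →
      2 * t / (1 - t ^ 2) - 2 * r * (p / t) / (1 - p) ≤ 2 * (r - 1) / t := by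
    intro p hp0 hb hD
    have ha' : 1 - t ^ 2 ≠ 0 := by rintro h0; rw [h0] at hD; simpa using hD
    have hbp' : 1 - p ≠ 0 := by rintro h0; rw [h0] at hD; simpa using hD
    have heq : 2 * t / (1 - t ^ 2) - 2 * r * (p / t) / (1 - p)
        = (2 * t ^ 2 * (1 - p) - 2 * r * p * (1 - t ^ 2)) / (t * ((1 - t ^ 2) * (1 - p))) := by
      field_simp
    rw [heq, div_le_div_iff₀ (by positivity) ht]
    nlinarith [hD, mul_pos ht ht]
  rcases lt_trichotomy t 1 with h | h | h
  · have hp1 : t ^ (2 * r) < 1 := rpow_lt_one ht.le h (by linarith)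
    have hp0 : 0 < t ^ (2 * r) := rpow_pos_of_pos ht _
    rw [Kker, kpow ht]
    exact main _ hp0 (bern' hr ht) (mul_pos (by nlinarith) (by linarith))
  · simp only [Kker, h]
    norm_num
    linarith
  · have hp1 : 1 < t ^ (2 * r) := one_lt_rpow h (by linarith)
    have hp0 : 0 < t ^ (2 * r) := rpow_pos_of_pos ht _
    rw [Kker, kpow ht]
    exact main _ hp0 (bern' hr ht) (mul_pos_of_neg_of_neg (by nlinarith) (by linarith))

lemma klow {r t : ℝ} (hr : 1 ≤ r) (ht : 0 < t) (ht2 : t ≤ 1/2) : Kker r t ≤ 8/3 * t := by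
  have h1 : t < 1 := by linarith
  have hp1 : t ^ (2 * r) < 1 := rpow_lt_one ht.le h1 (by linarith)
  have hp0 : (0:ℝ) ≤ t ^ (2 * r - 1) := (rpow_pos_of_pos ht _).le
  have hterm : 0 ≤ 2 * r * t ^ (2 * r - 1) / (1 - t ^ (2 * r)) := by
    apply div_nonneg (by positivity) (by linarith)
  have ha : (3:ℝ)/4 ≤ 1 - t ^ 2 := by nlinarith
  have : 2 * t / (1 - t ^ 2) ≤ 8/3 * t := by
    rw [div_le_iff₀ (by linarith)]
    nlinarith
  unfold Kker; linarith

lemma khigh {r t : ℝ} (hr : 1 ≤ r) (ht : 2 ≤ t) : Kker r t ≤ 8/3 * r / t := by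
  have ht0 : (0:ℝ) < t := by linarith
  have hp4 : (4:ℝ) ≤ t ^ (2 * r) := by
    calc (4:ℝ) = 2 ^ (2:ℝ) := by norm_num [rpow_natCast]
    _ ≤ 2 ^ (2 * r) := by
        apply rpow_le_rpow_left_iff (x := (2:ℝ)) (by norm_num) |>.mpr; linarith
    _ ≤ t ^ (2 * r) := rpow_le_rpow (by norm_num) ht (by linarith)
  have hp0 : (0:ℝ) < t ^ (2 * r) := by linarith
  have hterm : 2 * t / (1 - t ^ 2) ≤ 0 := by
    apply div_nonpos_of_nonneg_of_nonpos (by linarith) (by nlinarith)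
  have h2 : - (2 * r * t ^ (2 * r - 1) / (1 - t ^ (2 * r))) ≤ 8/3 * r / t := by
    rw [kpow ht0]
    rw [show (1 - t ^ (2*r)) = -(t ^ (2*r) - 1) by ring, div_neg, neg_neg]
    rw [div_le_div_iff₀ (by linarith) ht0]
    have : 2 * r * (t ^ (2*r) / t) * t = 2 * r * t ^ (2*r) := by field_simp
    rw [this]
    nlinarith
  unfold Kker; linarith


lemma sqrt_half : Real.sqrt (1/2) = Real.sqrt 2 / 2 := by
  have h0 : Real.sqrt 2 ≠ 0 := by positivity
  rw [show (1/2:ℝ) = 2⁻¹ by norm_num, Real.sqrt_inv, eq_div_iff (two_ne_zero),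
    inv_mul_eq_div, div_eq_iff h0]
  exact (Real.mul_self_sqrt (by norm_num)).symm

lemma integrand_eq {r t : ℝ} (ht : 0 < t) :
    ENNReal.ofReal (Kker r t) * ENNReal.ofReal t ^ (-(1/2) : ℝ)
      = ENNReal.ofReal (Kker r t * t ^ (-(1/2) : ℝ)) := by
  rw [ENNReal.ofReal_rpow_of_pos ht, ← ENNReal.ofReal_mul' (rpow_nonneg ht.le _)]

lemma piece_gen {r : ℝ} {s : Set ℝ} {m : ℝ → ℝ} (hmm : Measurable m)
    (hb : ∀ t ∈ s, Kker r t * t ^ (-(1/2) : ℝ) ≤ m t)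
    (hi : IntegrableOn m s) (hnn : ∀ t ∈ s, 0 ≤ m t) (hms : MeasurableSet s) :
    ∫⁻ t in s, ENNReal.ofReal (Kker r t * t ^ (-(1/2) : ℝ))
      ≤ ENNReal.ofReal (∫ t in s, m t) := by
  calc ∫⁻ t in s, ENNReal.ofReal (Kker r t * t ^ (-(1/2) : ℝ))
      ≤ ∫⁻ t in s, ENNReal.ofReal (m t) :=
        setLIntegral_mono hmm.ennreal_ofReal (fun t ht => ENNReal.ofReal_le_ofReal (hb t ht))
    _ = ENNReal.ofReal (∫ t in s, m t) := by
        rw [ofReal_integral_eq_lintegral_ofReal hi]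
        filter_upwards [ae_restrict_mem hms] with t ht using hnn t ht

lemma rpow_combine {t : ℝ} (ht : 0 < t) (a : ℝ) : t ^ a * t ^ (-(1/2) : ℝ) = t ^ (a - 1/2) := by
  rw [← Real.rpow_add ht]; ring_nf

lemma piece1 {r : ℝ} (hr : 1 ≤ r) :
    ∫⁻ t in Ioc (0:ℝ) (1/2), ENNReal.ofReal (Kker r t * t ^ (-(1/2) : ℝ))
      ≤ ENNReal.ofReal (4 * Real.sqrt 2 / 9) := by
  have key := piece_gen (r := r) (s := Ioc (0:ℝ) (1/2)) (m := fun t => 8/3 * t ^ ((1/2) : ℝ))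
    (by fun_prop)
    (fun t ht => by
      have ht0 : 0 < t := ht.1
      have h1 : Kker r t * t ^ (-(1/2) : ℝ) ≤ (8/3 * t) * t ^ (-(1/2) : ℝ) :=
        mul_le_mul_of_nonneg_right (klow hr ht0 ht.2) (rpow_nonneg ht0.le _)
      have h2 : (8/3 * t) * t ^ (-(1/2) : ℝ) = 8/3 * t ^ ((1/2) : ℝ) := by
        rw [mul_assoc]
        nth_rewrite 1 [← Real.rpow_one t]
        rw [rpow_combine ht0]
        norm_num
      linarith)
    ((intervalIntegral.intervalIntegrable_rpow' (by norm_num)).1.const_mul _)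
    (fun t ht => mul_nonneg (by norm_num) (rpow_nonneg ht.1.le _))
    measurableSet_Ioc
  refine key.trans (ENNReal.ofReal_le_ofReal ?_)
  rw [← intervalIntegral.integral_of_le (by norm_num : (0:ℝ) ≤ 1/2)]
  rw [intervalIntegral.integral_const_mul, integral_rpow (Or.inl (by norm_num))]
  rw [Real.zero_rpow (by norm_num)]
  have h3 : ((1:ℝ)/2) ^ ((1/2:ℝ) + 1) = Real.sqrt 2 / 4 := by
    rw [Real.rpow_add (by norm_num), Real.rpow_one, ← Real.sqrt_eq_rpow, sqrt_half]
    ring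
  rw [h3]; ring_nf; rfl

lemma piece2 {r : ℝ} (hr : 1 ≤ r) :
    ∫⁻ t in Ioc (1/2:ℝ) 2, ENNReal.ofReal (Kker r t * t ^ (-(1/2) : ℝ))
      ≤ ENNReal.ofReal (2 * Real.sqrt 2 * (r - 1)) := by
  have key := piece_gen (r := r) (s := Ioc (1/2:ℝ) 2)
    (m := fun t => 2 * (r-1) * t ^ ((-3/2) : ℝ))
    (by fun_prop)
    (fun t ht => by
      have ht0 : (0:ℝ) < t := lt_trans (by norm_num) ht.1
      have h1 : Kker r t * t ^ (-(1/2) : ℝ) ≤ (2 * (r-1) / t) * t ^ (-(1/2) : ℝ) :=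
        mul_le_mul_of_nonneg_right (kmid hr ht0) (rpow_nonneg ht0.le _)
      have hq : t ^ (-(1/2) : ℝ) / t = t ^ ((-3/2) : ℝ) := by
        rw [div_eq_mul_inv, ← Real.rpow_neg_one t, ← Real.rpow_add ht0]; norm_num
      have h2 : (2 * (r-1) / t) * t ^ (-(1/2) : ℝ) = 2 * (r-1) * t ^ ((-3/2) : ℝ) := by
        rw [← hq]; ring
      linarith)
    ((intervalIntegral.intervalIntegrable_rpow (Or.inr (by norm_num [Set.mem_uIcc]))).1.const_mul _)
    (fun t ht => mul_nonneg (by linarith) (rpow_nonneg (le_trans (by norm_num) ht.1.le) _))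
    measurableSet_Ioc
  refine key.trans (ENNReal.ofReal_le_ofReal ?_)
  rw [← intervalIntegral.integral_of_le (by norm_num : (1:ℝ)/2 ≤ 2)]
  rw [intervalIntegral.integral_const_mul, integral_rpow]
  · have e1 : (2:ℝ) ^ ((-3/2:ℝ) + 1) = Real.sqrt 2 / 2 := by
      rw [show (-3/2:ℝ) + 1 = -(1/2) by norm_num, Real.rpow_neg (by norm_num),
        ← Real.sqrt_eq_rpow, eq_div_iff (two_ne_zero)]
      have h0 : Real.sqrt 2 ≠ 0 := by positivity
      rw [inv_mul_eq_div, div_eq_iff h0]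
      exact (Real.mul_self_sqrt (by norm_num)).symm
    have e2 : ((1:ℝ)/2) ^ ((-3/2:ℝ) + 1) = Real.sqrt 2 := by
      rw [show (-3/2:ℝ) + 1 = -(1/2) by norm_num, Real.rpow_neg (by norm_num),
        ← Real.sqrt_eq_rpow, sqrt_half]
      have h0 : Real.sqrt 2 ≠ 0 := by positivity
      rw [inv_div, div_eq_iff h0]
      exact (Real.mul_self_sqrt (by norm_num)).symm
    rw [e1, e2]
    apply le_of_eq; ring
  · exact Or.inr ⟨by norm_num, by norm_num [Set.mem_uIcc]⟩
lemma piece3 {r : ℝ} (hr : 1 ≤ r) :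
    ∫⁻ t in Ioi (2:ℝ), ENNReal.ofReal (Kker r t * t ^ (-(1/2) : ℝ))
      ≤ ENNReal.ofReal (8/3 * r * Real.sqrt 2) := by
  have key := piece_gen (r := r) (s := Ioi (2:ℝ))
    (m := fun t => 8/3 * r * t ^ ((-3/2) : ℝ))
    (by fun_prop)
    (fun t ht => by
      have ht2 : (2:ℝ) ≤ t := (le_of_lt ht)
      have ht0 : (0:ℝ) < t := by linarith
      have h1 : Kker r t * t ^ (-(1/2) : ℝ) ≤ (8/3 * r / t) * t ^ (-(1/2) : ℝ) :=
        mul_le_mul_of_nonneg_right (khigh hr ht2) (rpow_nonneg ht0.le _)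
      have hq : t ^ (-(1/2) : ℝ) / t = t ^ ((-3/2) : ℝ) := by
        rw [div_eq_mul_inv, ← Real.rpow_neg_one t, ← Real.rpow_add ht0]; norm_num
      have h2 : (8/3 * r / t) * t ^ (-(1/2) : ℝ) = 8/3 * r * t ^ ((-3/2) : ℝ) := by
        rw [← hq]; ring
      linarith)
    ((integrableOn_Ioi_rpow_of_lt (by norm_num) (by norm_num)).const_mul _)
    (fun t ht => mul_nonneg (by positivity) (rpow_nonneg (by simp at ht; linarith) _))
    measurableSet_Ioi
  refine key.trans (ENNReal.ofReal_le_ofReal ?_)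
  simp only [MeasureTheory.integral_const_mul]
  rw [integral_Ioi_rpow_of_lt (by norm_num) (by norm_num)]
  have e1 : (2:ℝ) ^ ((-3/2:ℝ) + 1) = Real.sqrt 2 / 2 := by
    rw [show (-3/2:ℝ) + 1 = -(1/2) by norm_num, Real.rpow_neg (by norm_num),
      ← Real.sqrt_eq_rpow, eq_div_iff (two_ne_zero)]
    have h0 : Real.sqrt 2 ≠ 0 := by positivity
    rw [inv_mul_eq_div, div_eq_iff h0]
    exact (Real.mul_self_sqrt (by norm_num)).symm
  rw [e1]
  apply le_of_eq; ring

lemma Abound {r : ℝ} (hr : 1 ≤ r) :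
    ∫⁻ t in Ioi (0:ℝ), ENNReal.ofReal (Kker r t) * ENNReal.ofReal t ^ (-(1/2) : ℝ)
      ≤ ENNReal.ofReal (20 * Real.sqrt 2 / 3 * r) := by
  have hcong : ∫⁻ t in Ioi (0:ℝ), ENNReal.ofReal (Kker r t) * ENNReal.ofReal t ^ (-(1/2) : ℝ)
      = ∫⁻ t in Ioi (0:ℝ), ENNReal.ofReal (Kker r t * t ^ (-(1/2) : ℝ)) := by
    refine setLIntegral_congr_fun measurableSet_Ioi (fun t ht => integrand_eq ht)
  rw [hcong]
  have hsplit : Ioi (0:ℝ) = Ioc (0:ℝ) (1/2) ∪ (Ioc (1/2:ℝ) 2 ∪ Ioi (2:ℝ)) := by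
    rw [Set.Ioc_union_Ioi_eq_Ioi (by norm_num : (1/2:ℝ) ≤ 2),
      Set.Ioc_union_Ioi_eq_Ioi (by norm_num : (0:ℝ) ≤ 1/2)]
  rw [hsplit]
  rw [lintegral_union (measurableSet_Ioc.union measurableSet_Ioi)
    (by rw [Set.disjoint_left]; rintro x ⟨hx1, hx2⟩ (⟨hx3, _⟩ | hx3) <;> simp at hx3 ⊢ <;> linarith)]
  rw [lintegral_union measurableSet_Ioi (Set.Ioc_disjoint_Ioi le_rfl)]
  have hsum := add_le_add (piece1 hr) (add_le_add (piece2 hr) (piece3 hr))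
  refine hsum.trans ?_
  rw [← ENNReal.ofReal_add (by nlinarith [Real.sqrt_nonneg 2]) (by positivity),
    ← ENNReal.ofReal_add (by positivity) (by nlinarith [Real.sqrt_nonneg 2])]
  apply ENNReal.ofReal_le_ofReal
  nlinarith [Real.sqrt_nonneg 2]

lemma scale_lint {t : ℝ} (ht : 0 < t) {G : ℝ → ℝ≥0∞} (hG : Measurable G) :
    ∫⁻ x in Set.Ioi (0:ℝ), G (t * x) = ENNReal.ofReal t⁻¹ * ∫⁻ y in Set.Ioi (0:ℝ), G y := by
  have hm : Measurable fun x : ℝ => t * x := measurable_const_mul t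
  have hpre : (fun x : ℝ => t * x) ⁻¹' (Set.Ioi 0) = Set.Ioi 0 := by
    ext x
    simp only [Set.mem_preimage, Set.mem_Ioi]
    constructor
    · intro h; by_contra hx; push_neg at hx; nlinarith
    · intro h; exact mul_pos ht h
  calc ∫⁻ x in Set.Ioi (0:ℝ), G (t * x)
      = ∫⁻ y, G y ∂(Measure.map (fun x => t * x)
          (volume.restrict ((fun x : ℝ => t * x) ⁻¹' (Set.Ioi 0)))) := by
        rw [lintegral_map hG hm, hpre]
    _ = ∫⁻ y, G y ∂((Measure.map (fun x => t * x) volume).restrict (Set.Ioi 0)) := by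
        rw [Measure.restrict_map hm measurableSet_Ioi]
    _ = ENNReal.ofReal t⁻¹ * ∫⁻ y in Set.Ioi (0:ℝ), G y := by
        rw [Real.map_volume_mul_left (ne_of_gt ht), Measure.restrict_smul,
          lintegral_smul_measure, abs_of_pos (inv_pos.mpr ht), smul_eq_mul]


end HrAux

/-- Key `L²` estimate for `H^(r) − H^(1)`: there is a constant `C = 20√2/3` such that for all
`r ≥ 1` and `f ∈ L²((0,∞))`, the function
`g(x) = ∫₀^∞ (2t/(1−t²) − 2r·t^(2r−1)/(1−t^(2r)))·|f(tx)| dt` satisfies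
`‖g‖_{L²(0,∞)} ≤ C·r·‖f‖_{L²(0,∞)}` (interpreted in `[0,∞]`). -/
theorem Hr_L2_bound :
    ∃ C : ℝ, C = 20 * Real.sqrt 2 / 3 ∧
      ∀ (r : ℝ), 1 ≤ r → ∀ f : ℝ → ℝ,
        MemLp f 2 (volume.restrict (Set.Ioi 0)) →
        (∫⁻ x in Set.Ioi (0 : ℝ),
            (∫⁻ t in Set.Ioi (0 : ℝ),
              ENNReal.ofReal
                ((2 * t / (1 - t ^ 2) - 2 * r * t ^ (2 * r - 1) / (1 - t ^ (2 * r))) *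
                  |f (t * x)|)) ^ (2 : ℝ)) ^ (1/2 : ℝ)
          ≤ ENNReal.ofReal (C * r) * eLpNorm f 2 (volume.restrict (Set.Ioi 0)) := by
  refine ⟨20 * Real.sqrt 2 / 3, rfl, ?_⟩
  intro r hr f hf
  have hKk : ∀ t : ℝ,
      2 * t / (1 - t ^ 2) - 2 * r * t ^ (2 * r - 1) / (1 - t ^ (2 * r)) = Kker r t :=
    fun t => rfl
  simp only [hKk]
  -- measurable representative
  obtain ⟨f', hf'sm, hff'⟩ : ∃ f', StronglyMeasurable f'
      ∧ f =ᵐ[volume.restrict (Set.Ioi (0:ℝ))] f' :=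
    ⟨hf.1.mk f, hf.1.stronglyMeasurable_mk, hf.1.ae_eq_mk⟩
  have hf'm : Measurable f' := hf'sm.measurable
  have hnorm : eLpNorm f 2 (volume.restrict (Set.Ioi (0:ℝ)))
      = eLpNorm f' 2 (volume.restrict (Set.Ioi (0:ℝ))) := eLpNorm_congr_ae hff'
  have hae : ∀ᵐ y ∂(volume : Measure ℝ), y ∈ Set.Ioi (0:ℝ) → f y = f' y :=
    (ae_restrict_iff' measurableSet_Ioi).mp hff'
  have houter : (∫⁻ x in Set.Ioi (0:ℝ),
        (∫⁻ t in Set.Ioi (0:ℝ), ENNReal.ofReal (Kker r t * |f (t * x)|)) ^ (2:ℝ)) =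
      ∫⁻ x in Set.Ioi (0:ℝ),
        (∫⁻ t in Set.Ioi (0:ℝ), ENNReal.ofReal (Kker r t * |f' (t * x)|)) ^ (2:ℝ) := by
    refine setLIntegral_congr_fun measurableSet_Ioi (fun x hx => ?_)
    congr 1
    apply lintegral_congr_ae
    have hq : Measure.QuasiMeasurePreserving (fun t : ℝ => t * x) volume volume := by
      refine ⟨measurable_mul_const x, ?_⟩
      rw [Real.map_volume_mul_right (ne_of_gt hx)]
      exact Measure.smul_absolutelyContinuous
    filter_upwards [ae_restrict_of_ae (hq.ae hae), ae_restrict_mem measurableSet_Ioi]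
      with t h3 h4
    rw [h3 (Set.mem_Ioi.mpr (mul_pos h4 hx))]
  rw [houter, hnorm]
  clear houter hnorm hae hff' hf hKk
  -- notation
  set w : ℝ → ℝ≥0∞ := fun t => ENNReal.ofReal t ^ (-(1/2 : ℝ)) with hw
  set a : ℝ → ℝ≥0∞ := fun t => ENNReal.ofReal (Kker r t) with ha
  set N := ∫⁻ y in Set.Ioi (0:ℝ), ENNReal.ofReal |f' y| ^ (2:ℝ) with hN
  set A := ∫⁻ t in Set.Ioi (0:ℝ), a t * w t with hA
  have hAle : A ≤ ENNReal.ofReal (20 * Real.sqrt 2 / 3 * r) := Abound hr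
  have hAtop : A ≠ ⊤ := (lt_of_le_of_lt hAle ENNReal.ofReal_lt_top).ne
  have hwpos : ∀ t : ℝ, 0 < t → w t ≠ 0 ∧ w t ≠ ⊤ := by
    intro t ht
    have : w t = ENNReal.ofReal (t ^ (-(1/2) : ℝ)) := ENNReal.ofReal_rpow_of_pos ht
    rw [this]
    exact ⟨by simp [ENNReal.ofReal_eq_zero, not_le, Real.rpow_pos_of_pos ht],
      ENNReal.ofReal_ne_top⟩
  have hwm : Measurable w := by fun_prop
  have ham : Measurable a := (kker_meas r).ennreal_ofReal
  have hGm : Measurable fun y : ℝ => ENNReal.ofReal |f' y| ^ (2:ℝ) := by fun_prop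
  -- Cauchy-Schwarz for each x
  have hpoint : ∀ x : ℝ,
      (∫⁻ t in Set.Ioi (0:ℝ), ENNReal.ofReal (Kker r t * |f' (t * x)|)) ^ (2:ℝ)
        ≤ A * ∫⁻ t in Set.Ioi (0:ℝ),
            a t * (w t)⁻¹ * ENNReal.ofReal |f' (t * x)| ^ (2:ℝ) := by
    intro x
    set b : ℝ → ℝ≥0∞ := fun t => ENNReal.ofReal |f' (t * x)| with hb
    have hbm : Measurable b := by fun_prop
    have hsplit : ∀ t ∈ Set.Ioi (0:ℝ),
        ENNReal.ofReal (Kker r t * |f' (t * x)|)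
          = ((a t * w t) ^ (1/2:ℝ)) * ((a t * (w t)⁻¹ * b t ^ (2:ℝ)) ^ (1/2:ℝ)) := by
      intro t ht
      have hw0 := hwpos t ht
      have hane : a t ≠ ⊤ := ENNReal.ofReal_ne_top
      have hbne : b t ≠ ⊤ := ENNReal.ofReal_ne_top
      rw [ENNReal.ofReal_mul' (abs_nonneg _)]
      rw [← ENNReal.mul_rpow_of_nonneg _ _ (by norm_num : (0:ℝ) ≤ 1/2)]
      have : a t * w t * (a t * (w t)⁻¹ * b t ^ (2:ℝ)) = (a t * b t) ^ (2:ℝ) := by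
        rw [show (2:ℝ) = ((2:ℕ):ℝ) by norm_num, ENNReal.rpow_natCast, ENNReal.rpow_natCast]
        have hcancel : w t * (w t)⁻¹ = 1 := ENNReal.mul_inv_cancel hw0.1 hw0.2
        calc a t * w t * (a t * (w t)⁻¹ * b t ^ 2)
            = (a t * b t) ^ 2 * (w t * (w t)⁻¹) := by ring
          _ = (a t * b t) ^ 2 := by rw [hcancel, mul_one]
      rw [this, ← ENNReal.rpow_mul]
      norm_num
      rfl
    calc (∫⁻ t in Set.Ioi (0:ℝ), ENNReal.ofReal (Kker r t * |f' (t * x)|)) ^ (2:ℝ)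
        = (∫⁻ t in Set.Ioi (0:ℝ),
            ((a t * w t) ^ (1/2:ℝ)) * ((a t * (w t)⁻¹ * b t ^ (2:ℝ)) ^ (1/2:ℝ))) ^ (2:ℝ) := by
          rw [setLIntegral_congr_fun measurableSet_Ioi hsplit]
      _ ≤ ((∫⁻ t in Set.Ioi (0:ℝ), ((a t * w t) ^ (1/2:ℝ)) ^ (2:ℝ)) ^ (1/(2:ℝ))
            * (∫⁻ t in Set.Ioi (0:ℝ), ((a t * (w t)⁻¹ * b t ^ (2:ℝ)) ^ (1/2:ℝ)) ^ (2:ℝ)) ^ (1/(2:ℝ))) ^ (2:ℝ) := by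
          apply ENNReal.rpow_le_rpow _ (by norm_num : (0:ℝ) ≤ 2)
          exact ENNReal.lintegral_mul_le_Lp_mul_Lq _ Real.HolderConjugate.two_two
            (by fun_prop) (by fun_prop)
      _ = A * ∫⁻ t in Set.Ioi (0:ℝ), a t * (w t)⁻¹ * b t ^ (2:ℝ) := by
          have e1 : ∀ z : ℝ≥0∞, (z ^ (1/2:ℝ)) ^ (2:ℝ) = z := by
            intro z; rw [← ENNReal.rpow_mul]; norm_num
          simp only [e1]
          rw [← ENNReal.mul_rpow_of_nonneg _ _ (by norm_num : (0:ℝ) ≤ 1/2),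
            ← ENNReal.rpow_mul]
          norm_num [hA]
  -- outer integral
  have houter2 : (∫⁻ x in Set.Ioi (0:ℝ),
      (∫⁻ t in Set.Ioi (0:ℝ), ENNReal.ofReal (Kker r t * |f' (t * x)|)) ^ (2:ℝ))
      ≤ A * (A * N) := by
    calc (∫⁻ x in Set.Ioi (0:ℝ),
        (∫⁻ t in Set.Ioi (0:ℝ), ENNReal.ofReal (Kker r t * |f' (t * x)|)) ^ (2:ℝ))
        ≤ ∫⁻ x in Set.Ioi (0:ℝ), A * ∫⁻ t in Set.Ioi (0:ℝ),
            a t * (w t)⁻¹ * ENNReal.ofReal |f' (t * x)| ^ (2:ℝ) :=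
          lintegral_mono fun x => hpoint x
      _ = A * ∫⁻ x in Set.Ioi (0:ℝ), ∫⁻ t in Set.Ioi (0:ℝ),
            a t * (w t)⁻¹ * ENNReal.ofReal |f' (t * x)| ^ (2:ℝ) :=
          lintegral_const_mul' _ _ hAtop
      _ = A * ∫⁻ t in Set.Ioi (0:ℝ), ∫⁻ x in Set.Ioi (0:ℝ),
            a t * (w t)⁻¹ * ENNReal.ofReal |f' (t * x)| ^ (2:ℝ) := by
          congr 1
          apply lintegral_lintegral_swap
          apply Measurable.aemeasurable
          fun_prop
      _ = A * (A * N) := by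
          congr 1
          have hswap : ∀ t ∈ Set.Ioi (0:ℝ),
              (∫⁻ x in Set.Ioi (0:ℝ), a t * (w t)⁻¹ * ENNReal.ofReal |f' (t * x)| ^ (2:ℝ))
                = a t * w t * N := by
            intro t ht
            have hw0 := hwpos t ht
            rw [lintegral_const_mul' _ _ (ENNReal.mul_ne_top ENNReal.ofReal_ne_top
              (by simpa using hw0.1))]
            rw [scale_lint ht hGm]
            have hwinv : (w t)⁻¹ * ENNReal.ofReal t⁻¹ = w t := by
              rw [hw, ← ENNReal.rpow_neg, ENNReal.ofReal_inv_of_pos ht,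
                ← ENNReal.rpow_neg_one (ENNReal.ofReal t),
                ← ENNReal.rpow_add _ _ (by simpa using ht) ENNReal.ofReal_ne_top]
              norm_num
            calc a t * (w t)⁻¹ * (ENNReal.ofReal t⁻¹ * N)
                = a t * ((w t)⁻¹ * ENNReal.ofReal t⁻¹) * N := by ring
              _ = a t * w t * N := by rw [hwinv]
          rw [setLIntegral_congr_fun measurableSet_Ioi hswap]
          rw [lintegral_mul_const _ (show Measurable fun t => a t * w t from ham.mul hwm)]
  -- conclude
  have hfinal : (∫⁻ x in Set.Ioi (0:ℝ),
      (∫⁻ t in Set.Ioi (0:ℝ), ENNReal.ofReal (Kker r t * |f' (t * x)|)) ^ (2:ℝ)) ^ (1/2:ℝ)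
      ≤ A * N ^ (1/2:ℝ) := by
    calc (∫⁻ x in Set.Ioi (0:ℝ),
        (∫⁻ t in Set.Ioi (0:ℝ), ENNReal.ofReal (Kker r t * |f' (t * x)|)) ^ (2:ℝ)) ^ (1/2:ℝ)
        ≤ (A * (A * N)) ^ (1/2:ℝ) := ENNReal.rpow_le_rpow houter2 (by norm_num)
      _ = A * N ^ (1/2:ℝ) := by
          rw [ENNReal.mul_rpow_of_nonneg _ _ (by norm_num : (0:ℝ) ≤ 1/2),
            ENNReal.mul_rpow_of_nonneg _ _ (by norm_num : (0:ℝ) ≤ 1/2), ← mul_assoc]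
          congr 1
          rw [← ENNReal.rpow_add_of_nonneg _ _ (by norm_num) (by norm_num)]
          norm_num
  refine hfinal.trans ?_
  have hNnorm : N ^ (1/2:ℝ) = eLpNorm f' 2 (volume.restrict (Set.Ioi (0:ℝ))) := by
    rw [eLpNorm_eq_lintegral_rpow_enorm_toReal (by norm_num) (by norm_num)]
    have : ∀ y : ℝ, ‖f' y‖ₑ = ENNReal.ofReal |f' y| :=
      fun y => Real.enorm_eq_ofReal_abs _
    simp only [this, ENNReal.toReal_ofNat, hN]
  rw [hNnorm]
  exact mul_le_mul_left hAle _
end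

section
/- For every real r ≥ 1, the function t ↦ (2r·t/(1 − t^(2r)) − 2t/(1 − t²))·t^(−1/2) is nonnegative on (0, ∞) \ {1}, and its Lebesgue integral over (0, ∞) satisfies ∫₀^∞ (2r·t/(1 − t^(2r)) − 2t/(1 − t²))·t^(−1/2) dt ≤ 4√2·r + 8√2/3. -/
open MeasureTheory
open scoped ENNReal

lemma bern_aux {u r : ℝ} (hu : 0 < u) (hr : 1 ≤ r) : 1 + r * (u - 1) ≤ u ^ r := by
  have h := one_add_mul_self_le_rpow_one_add (s := u - 1) (by linarith) hr
  simpa using h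

lemma L1_aux {u r : ℝ} (hu : 0 < u) (hr : 1 ≤ r) :
    u ^ r + r * u ^ (r - 1) * (1 - u) ≤ 1 := by
  have hur : (0:ℝ) < u ^ r := Real.rpow_pos_of_pos hu r
  have key := bern_aux (show (0:ℝ) < 1/u by positivity) hr
  rw [one_div, Real.inv_rpow hu.le] at key
  have h2 := mul_le_mul_of_nonneg_right key hur.le
  rw [inv_mul_cancel₀ hur.ne'] at h2
  have hsub : u ^ (r-1) = u ^ r / u := by
    rw [Real.rpow_sub hu, Real.rpow_one]
  rw [hsub]
  have h3 : u ^ r / u * u = u ^ r := div_mul_cancel₀ _ hu.ne'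
  have h4 : u⁻¹ * u ^ r = u ^ r / u := by rw [div_eq_mul_inv]; ring
  nlinarith [h2, h3, h4]

lemma pow_conv {t r : ℝ} (ht : 0 ≤ t) : t ^ (2*r) = ((t^2 : ℝ)) ^ r := by
  rw [Real.rpow_mul ht, show ((2:ℝ)) = ((2:ℕ):ℝ) by norm_num, Real.rpow_natCast]

lemma g_nonneg {r t : ℝ} (hr : 1 ≤ r) (ht : 0 < t) (ht1 : t ≠ 1) :
    0 ≤ 2*r*t/(1 - t^(2*r)) - 2*t/(1 - t^2) := by
  have hconv : t^(2*r) = ((t^2:ℝ))^r := pow_conv ht.le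
  set u := (t^2 : ℝ) with hu
  have hu0 : 0 < u := by positivity
  rw [hconv]
  rcases lt_or_gt_of_ne ht1 with h | h
  · have hu1 : u < 1 := by nlinarith
    have hA : u ^ r < 1 := Real.rpow_lt_one hu0.le hu1 (by linarith)
    have hb := bern_aux hu0 hr
    rw [sub_nonneg, div_le_div_iff₀ (by linarith) (by linarith)]
    nlinarith [ht.le]
  · have hu1 : 1 < u := by nlinarith
    have hA : 1 < u ^ r := Real.one_lt_rpow_iff_of_pos hu0 |>.2 (Or.inl ⟨hu1, by linarith⟩)
    have hb := bern_aux hu0 hr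
    rw [sub_nonneg, show (1 - u^r) = -(u^r - 1) by ring, show (1 - u) = -(u - 1) by ring,
      div_neg, div_neg, neg_le_neg_iff, div_le_div_iff₀ (by linarith) (by linarith)]
    nlinarith [ht.le]

lemma g_le_lt {r t : ℝ} (hr : 1 ≤ r) (ht : 0 < t) (ht1 : t < 1) :
    2*r*t/(1 - t^(2*r)) - 2*t/(1 - t^2) ≤ 2*r*t := by
  have hconv : t^(2*r) = ((t^2:ℝ))^r := pow_conv ht.le
  set u := (t^2 : ℝ) with hu
  have hu0 : 0 < u := by positivity
  have hu1 : u < 1 := by nlinarith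
  rw [hconv]
  have hA : u ^ r < 1 := Real.rpow_lt_one hu0.le hu1 (by linarith)
  have hA0 : (0:ℝ) < u ^ r := Real.rpow_pos_of_pos hu0 r
  have hmono : u ^ r ≤ u ^ (r-1) :=
    Real.rpow_le_rpow_of_exponent_ge hu0 hu1.le (by linarith)
  have hL1 := L1_aux hu0 hr
  have key : r * u^r * (1-u) ≤ 1 - u^r := by nlinarith
  rw [div_sub_div _ _ (by linarith : (1:ℝ) - u^r ≠ 0) (by linarith : (1:ℝ) - u ≠ 0),
    div_le_iff₀ (by nlinarith : (0:ℝ) < (1 - u^r) * (1 - u))]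
  have hk := mul_le_mul_of_nonneg_left key (by positivity : (0:ℝ) ≤ 2*t)
  nlinarith [hk]

lemma g_le_gt {r t : ℝ} (hr : 1 ≤ r) (ht1 : 1 < t) :
    2*r*t/(1 - t^(2*r)) - 2*t/(1 - t^2) ≤ 2*t*(r-1) := by
  have ht : (0:ℝ) < t := by linarith
  have hconv : t^(2*r) = ((t^2:ℝ))^r := pow_conv ht.le
  set u := (t^2 : ℝ) with hu
  have hu0 : 0 < u := by positivity
  have hu1 : 1 < u := by nlinarith
  rw [hconv]
  have hA : 1 < u ^ r := Real.one_lt_rpow_iff_of_pos hu0 |>.2 (Or.inl ⟨hu1, by linarith⟩)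
  have hsub : u ^ (r-1) = u ^ r / u := by rw [Real.rpow_sub hu0, Real.rpow_one]
  have hL1 := L1_aux hu0 hr
  rw [hsub] at hL1
  have hcan : u ^ r / u * u = u ^ r := div_mul_cancel₀ _ hu0.ne'
  have h3 : u * (u^r - 1) ≤ r * (u^r) * (u - 1) := by
    have hmul := mul_le_mul_of_nonneg_right hL1 hu0.le
    have e2 : (u ^ r + r * (u^r/u) * (1-u)) * u = u^r*u + r*u^r*(1-u) := by
      field_simp
    rw [e2, one_mul] at hmul
    linarith [hmul]
  rw [show (1 - u^r) = -(u^r - 1) by ring, show (1 - u) = -(u - 1) by ring,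
    div_neg, div_neg]
  rw [show -(2*r*t/(u^r-1)) - -(2*t/(u-1)) = 2*t/(u-1) - 2*r*t/(u^r-1) by ring]
  rw [div_sub_div _ _ (by linarith : u - 1 ≠ 0) (by linarith : u^r - 1 ≠ 0),
    div_le_iff₀ (by nlinarith : (0:ℝ) < (u - 1) * (u^r - 1))]
  have hk := mul_le_mul_of_nonneg_left h3 (by positivity : (0:ℝ) ≤ 2*t)
  nlinarith [hk]

lemma g_le_tail {r t : ℝ} (hr : 1 ≤ r) (ht1 : 1 < t) :
    2*r*t/(1 - t^(2*r)) - 2*t/(1 - t^2) ≤ 2*t/(t^2 - 1) := by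
  have ht : (0:ℝ) < t := by linarith
  have hconv : t^(2*r) = ((t^2:ℝ))^r := pow_conv ht.le
  set u := (t^2 : ℝ) with hu
  have hu0 : 0 < u := by positivity
  have hu1 : 1 < u := by nlinarith
  rw [hconv]
  have hA : 1 < u ^ r := Real.one_lt_rpow_iff_of_pos hu0 |>.2 (Or.inl ⟨hu1, by linarith⟩)
  rw [show (1 - u^r) = -(u^r - 1) by ring, show (1 - u) = -(u - 1) by ring,
    div_neg, div_neg]
  have hApos : (0:ℝ) < u^r - 1 := by linarith
  have hpos : 0 ≤ 2*r*t/(u^r - 1) := div_nonneg (by positivity) hApos.le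
  linarith [hpos]

lemma t_mul_rpow_half {t : ℝ} (ht : 0 < t) : t * t ^ (-(1/2) : ℝ) = t ^ ((1:ℝ)/2) := by
  nth_rewrite 1 [← Real.rpow_one t]
  rw [← Real.rpow_add ht]
  norm_num

lemma inv_mul_rpow_half {t : ℝ} (ht : 0 < t) : t⁻¹ * t ^ (-(1/2) : ℝ) = t ^ (-(3/2) : ℝ) := by
  rw [← Real.rpow_neg_one t, ← Real.rpow_add ht]
  norm_num

/-- For `r ≥ 1`, the kernel difference `(2r·t/(1−t^(2r)) − 2t/(1−t²))·t^(−1/2)` is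
nonnegative on `(0, ∞) \ {1}` and its Lebesgue integral over `(0, ∞)` is at most
`4√2·r + 8√2/3`. -/
theorem kernel_integral_bound_second_deriv (r : ℝ) (hr : 1 ≤ r) :
    (∀ t ∈ Set.Ioi (0 : ℝ), t ≠ 1 →
      0 ≤ (2 * r * t / (1 - t ^ (2 * r)) - 2 * t / (1 - t ^ 2)) * t ^ (-(1/2) : ℝ)) ∧
    ∫⁻ t in Set.Ioi (0 : ℝ),
        ENNReal.ofReal
          ((2 * r * t / (1 - t ^ (2 * r)) - 2 * t / (1 - t ^ 2)) * t ^ (-(1/2) : ℝ))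
      ≤ ENNReal.ofReal (4 * Real.sqrt 2 * r + 8 * Real.sqrt 2 / 3) := by
  have hs2 : (1:ℝ) ≤ Real.sqrt 2 := by
    nlinarith [Real.sq_sqrt (show (0:ℝ) ≤ 2 by norm_num), Real.sqrt_nonneg 2]
  constructor
  · intro t ht ht1
    exact mul_nonneg (g_nonneg hr ht ht1) (Real.rpow_nonneg (le_of_lt ht) _)
  -- pointwise bounds
  set f : ℝ → ℝ≥0∞ := fun t => ENNReal.ofReal
      ((2 * r * t / (1 - t ^ (2 * r)) - 2 * t / (1 - t ^ 2)) * t ^ (-(1/2) : ℝ)) with hf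
  have ub1 : ∀ t ∈ Set.Ioc (0:ℝ) 1, f t ≤ ENNReal.ofReal (2*r) := by
    rintro t ⟨ht0, ht1⟩
    apply ENNReal.ofReal_le_ofReal
    rcases eq_or_lt_of_le ht1 with h | h
    · subst h
      norm_num [Real.one_rpow]
      linarith
    · have h1 := g_le_lt hr ht0 h
      have h2 : (0:ℝ) ≤ t ^ (-(1/2) : ℝ) := Real.rpow_nonneg ht0.le _
      calc (2 * r * t / (1 - t ^ (2 * r)) - 2 * t / (1 - t ^ 2)) * t ^ (-(1/2) : ℝ)
          ≤ (2*r*t) * t ^ (-(1/2) : ℝ) := mul_le_mul_of_nonneg_right h1 h2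
        _ = 2*r*(t * t ^ (-(1/2) : ℝ)) := by ring
        _ = 2*r*(t ^ ((1:ℝ)/2)) := by rw [t_mul_rpow_half ht0]
        _ ≤ 2*r*1 := by
            have := Real.rpow_le_one ht0.le ht1 (by norm_num : (0:ℝ) ≤ 1/2)
            nlinarith
        _ = 2*r := by ring
  have ub2 : ∀ t ∈ Set.Ioc (1:ℝ) 2, f t ≤ ENNReal.ofReal (2*Real.sqrt 2*(r-1)) := by
    rintro t ⟨ht1, ht2⟩
    apply ENNReal.ofReal_le_ofReal
    have ht0 : (0:ℝ) < t := by linarith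
    have h1 := g_le_gt hr ht1
    have h2 : (0:ℝ) ≤ t ^ (-(1/2) : ℝ) := Real.rpow_nonneg ht0.le _
    calc (2 * r * t / (1 - t ^ (2 * r)) - 2 * t / (1 - t ^ 2)) * t ^ (-(1/2) : ℝ)
        ≤ (2*t*(r-1)) * t ^ (-(1/2) : ℝ) := mul_le_mul_of_nonneg_right h1 h2
      _ = 2*(r-1)*(t * t ^ (-(1/2) : ℝ)) := by ring
      _ = 2*(r-1)*(t ^ ((1:ℝ)/2)) := by rw [t_mul_rpow_half ht0]
      _ ≤ 2*(r-1)*(Real.sqrt 2) := by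
          have h3 : t ^ ((1:ℝ)/2) ≤ (2:ℝ) ^ ((1:ℝ)/2) :=
            Real.rpow_le_rpow ht0.le ht2 (by norm_num)
          rw [Real.sqrt_eq_rpow]
          nlinarith [h3]
      _ = 2*Real.sqrt 2*(r-1) := by ring
  have ub3 : ∀ t ∈ Set.Ioi (2:ℝ), f t ≤ ENNReal.ofReal ((8/3) * t ^ (-(3/2) : ℝ)) := by
    intro t ht
    simp only [Set.mem_Ioi] at ht
    apply ENNReal.ofReal_le_ofReal
    have ht1 : (1:ℝ) < t := by linarith
    have ht0 : (0:ℝ) < t := by linarith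
    have h1 := g_le_tail hr ht1
    have h2 : (0:ℝ) ≤ t ^ (-(1/2) : ℝ) := Real.rpow_nonneg ht0.le _
    have h4 : 2*t/(t^2 - 1) ≤ (8/3) * t⁻¹ := by
      rw [div_le_iff₀ (by nlinarith : (0:ℝ) < t^2 - 1)]
      have : (8/3) * t⁻¹ * (t^2-1) = (8/3)*(t⁻¹*t)*t - (8/3)*t⁻¹ := by ring
      rw [this, inv_mul_cancel₀ ht0.ne']
      have h5 : (0:ℝ) < t⁻¹ := by positivity
      have h6 : t⁻¹ ≤ 1/2 := by rw [inv_le_comm₀ ht0 (by norm_num)]; linarith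
      nlinarith
    calc (2 * r * t / (1 - t ^ (2 * r)) - 2 * t / (1 - t ^ 2)) * t ^ (-(1/2) : ℝ)
        ≤ (2*t/(t^2-1)) * t ^ (-(1/2) : ℝ) := mul_le_mul_of_nonneg_right h1 h2
      _ ≤ ((8/3) * t⁻¹) * t ^ (-(1/2) : ℝ) := by
          apply mul_le_mul_of_nonneg_right h4 h2
      _ = (8/3) * (t⁻¹ * t ^ (-(1/2) : ℝ)) := by ring
      _ = (8/3) * t ^ (-(3/2) : ℝ) := by rw [inv_mul_rpow_half ht0]
  -- split the domain
  have hset : Set.Ioi (0:ℝ) = (Set.Ioc 0 1 ∪ Set.Ioc 1 2) ∪ Set.Ioi 2 := by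
    rw [Set.Ioc_union_Ioc_eq_Ioc (by norm_num) (by norm_num),
      Set.Ioc_union_Ioi_eq_Ioi (by norm_num)]
  have hd1 : Disjoint (Set.Ioc (0:ℝ) 1 ∪ Set.Ioc 1 2) (Set.Ioi 2) := by
    rw [Set.Ioc_union_Ioc_eq_Ioc (by norm_num) (by norm_num)]
    exact Set.Ioc_disjoint_Ioi le_rfl
  have hd2 : Disjoint (Set.Ioc (0:ℝ) 1) (Set.Ioc 1 2) := Set.Ioc_disjoint_Ioc_of_le le_rfl
  rw [hset, lintegral_union measurableSet_Ioi hd1,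
    lintegral_union measurableSet_Ioc hd2]
  -- bound each piece
  have p1 : ∫⁻ t in Set.Ioc (0:ℝ) 1, f t ≤ ENNReal.ofReal (2*r) := by
    calc ∫⁻ t in Set.Ioc (0:ℝ) 1, f t
        ≤ ∫⁻ _ in Set.Ioc (0:ℝ) 1, ENNReal.ofReal (2*r) :=
          setLIntegral_mono' measurableSet_Ioc ub1
      _ = ENNReal.ofReal (2*r) := by
          rw [setLIntegral_const, Real.volume_Ioc]
          norm_num
  have p2 : ∫⁻ t in Set.Ioc (1:ℝ) 2, f t ≤ ENNReal.ofReal (2*Real.sqrt 2*(r-1)) := by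
    calc ∫⁻ t in Set.Ioc (1:ℝ) 2, f t
        ≤ ∫⁻ _ in Set.Ioc (1:ℝ) 2, ENNReal.ofReal (2*Real.sqrt 2*(r-1)) :=
          setLIntegral_mono' measurableSet_Ioc ub2
      _ = ENNReal.ofReal (2*Real.sqrt 2*(r-1)) := by
          rw [setLIntegral_const, Real.volume_Ioc]
          norm_num
  have p3 : ∫⁻ t in Set.Ioi (2:ℝ), f t ≤ ENNReal.ofReal (8*Real.sqrt 2/3) := by
    have hI : IntegrableOn (fun t : ℝ => (8/3) * t ^ (-(3/2):ℝ)) (Set.Ioi 2) :=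
      (integrableOn_Ioi_rpow_of_lt (by norm_num) (by norm_num)).const_mul _
    have hval : ∫ t in Set.Ioi (2:ℝ), (8/3) * t ^ (-(3/2):ℝ) = 8*Real.sqrt 2/3 := by
      rw [integral_const_mul, integral_Ioi_rpow_of_lt (by norm_num) (by norm_num)]
      have e1 : (-(3/2) : ℝ) + 1 = -(1/2) := by norm_num
      rw [e1]
      have e2 : (2:ℝ) ^ (-(1/2) : ℝ) = (Real.sqrt 2)⁻¹ := by
        rw [Real.rpow_neg (by norm_num), Real.sqrt_eq_rpow]
      rw [e2]
      have hs : Real.sqrt 2 * Real.sqrt 2 = 2 := Real.mul_self_sqrt (by norm_num)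
      field_simp
      rw [sq, hs]
    calc ∫⁻ t in Set.Ioi (2:ℝ), f t
        ≤ ∫⁻ t in Set.Ioi (2:ℝ), ENNReal.ofReal ((8/3) * t ^ (-(3/2):ℝ)) :=
          setLIntegral_mono' measurableSet_Ioi ub3
      _ = ENNReal.ofReal (8*Real.sqrt 2/3) := by
          rw [← ofReal_integral_eq_lintegral_ofReal hI]
          · rw [hval]
          · filter_upwards [ae_restrict_mem measurableSet_Ioi] with t ht
            have : (0:ℝ) < t := lt_trans (by norm_num) ht
            positivity
  refine le_trans (add_le_add (add_le_add p1 p2) p3) ?_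
  have hn1 : (0:ℝ) ≤ 2*r := by linarith
  have hn2 : (0:ℝ) ≤ 2*Real.sqrt 2*(r-1) := by
    nlinarith [Real.sqrt_nonneg 2]
  have hn3 : (0:ℝ) ≤ 8*Real.sqrt 2/3 := by positivity
  rw [← ENNReal.ofReal_add hn1 hn2, ← ENNReal.ofReal_add (by linarith) hn3]
  apply ENNReal.ofReal_le_ofReal
  nlinarith [hs2, hr]
end

section
/- For every real r ≥ 1 and every f ∈ L²((0, ∞)), the function g(x) = ∫₀^∞ (2r·t/(1 − t^(2r)) − 2t/(1 − t²))·|f(t·x)| dt (defined for x > 0) satisfies ‖g‖_{L²(0,∞)} ≤ (4√2·r + 8√2/3)·‖f‖_{L²(0,∞)}. -/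
open MeasureTheory

open Set ENNReal NNReal

noncomputable def Bker (r : ℝ) (t : ℝ) : ℝ := if t ≤ 2 then 2*r*t else 2*t/(t^2-1)

lemma kernel_le {r t : ℝ} (hr : 1 ≤ r) (ht : 0 < t) :
    2 * r * t / (1 - t ^ (2 * r)) - 2 * t / (1 - t ^ 2) ≤ Bker r t := by
  have hr0 : (0:ℝ) < r := lt_of_lt_of_le one_pos hr
  rcases lt_trichotomy t 1 with h1 | h1 | h1
  · -- t < 1
    rw [Bker, if_pos (by linarith)]
    set s := Real.log t with hs
    have hs0 : s < 0 := Real.log_neg ht h1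
    have hsne : s ≠ 0 := ne_of_lt hs0
    have hrpow : t ^ (2*r) = Real.exp (2*r*s) := by
      rw [Real.rpow_def_of_pos ht, hs]; ring_nf
    have hx : (0:ℝ) < -(2*r*s) := by nlinarith
    have hd : (0:ℝ) < 1-2*r*s := by nlinarith
    have hp : 0 < Real.exp (2*r*s) := Real.exp_pos _
    have hcancel : Real.exp (2*r*s) * (Real.exp (2*r*s))⁻¹ = 1 := mul_inv_cancel₀ hp.ne'
    have hexp : Real.exp (2*r*s) ≤ 1/(1-2*r*s) := by
      have h1' : -(2*r*s) + 1 ≤ (Real.exp (2*r*s))⁻¹ := by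
        have := Real.add_one_le_exp (-(2*r*s)); rwa [Real.exp_neg] at this
      rw [le_div_iff₀ hd]
      nlinarith [inv_pos.2 hp]
    have hm : (0:ℝ) < (-(2*r*s))/(1-2*r*s) := div_pos hx hd
    have ha : (-(2*r*s))/(1-2*r*s) ≤ 1 - t ^ (2*r) := by
      have hmul : Real.exp (2*r*s) * (1-2*r*s) ≤ 1 := (le_div_iff₀ hd).1 hexp
      rw [hrpow, div_le_iff₀ hd]
      nlinarith [hmul]
    have ha0 : 0 < 1 - t ^ (2*r) := lt_of_lt_of_le hm ha
    have t1 : 2*r*t/(1 - t^(2*r)) ≤ t/(-s) + 2*r*t := by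
      have h2 := div_le_div_of_nonneg_left (by positivity : (0:ℝ) ≤ 2*r*t) hm ha
      calc 2*r*t/(1 - t^(2*r)) ≤ 2*r*t / ((-(2*r*s))/(1-2*r*s)) := h2
        _ = t/(-s) + 2*r*t := by
            rw [div_div_eq_mul_div]
            field_simp [hsne]
            ring
    have hlog2 : 1 - t^2 ≤ -(2*s) := by
      have := Real.log_le_sub_one_of_pos (by positivity : (0:ℝ) < t^2)
      rw [show Real.log (t^2) = 2*s by rw [hs, Real.log_pow]; push_cast; ring] at this
      linarith
    have ht2 : 0 < 1 - t^2 := by nlinarith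
    have t2 : t/(-s) ≤ 2*t/(1 - t^2) := by
      have h3 := div_le_div_of_nonneg_left (by positivity : (0:ℝ) ≤ 2*t) ht2 hlog2
      calc t/(-s) = 2*t/(-(2*s)) := by rw [div_eq_div_iff (by linarith) (by linarith)]; ring
        _ ≤ 2*t/(1-t^2) := h3
    linarith
  · -- t = 1
    subst h1
    rw [Bker, if_pos (by norm_num)]
    simp [Real.one_rpow]
    nlinarith
  · -- 1 < t
    have hs0 : 0 < Real.log t := Real.log_pos h1
    set s := Real.log t with hs
    have hsne : s ≠ 0 := ne_of_gt hs0
    have hrpow : t ^ (2*r) = Real.exp (2*r*s) := by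
      rw [Real.rpow_def_of_pos ht, hs]; ring_nf
    have hrp1 : 1 < t ^ (2*r) := by
      rw [hrpow, show (1:ℝ) = Real.exp 0 by simp]
      exact Real.exp_lt_exp.2 (by positivity)
    have ht2 : 1 < t^2 := by nlinarith
    have hEne : t ^ (2*r) ≠ 0 := by positivity
    have key : 2 * r * t / (1 - t ^ (2 * r)) - 2 * t / (1 - t ^ 2)
        = 2*t/(t^2-1) - 2*r*t/(t^(2*r)-1) := by
      have n1 : 1 - t^(2*r) ≠ 0 := by nlinarith
      have n2 : 1 - t^2 ≠ 0 := by nlinarith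
      have n3 : t^(2*r) - 1 ≠ 0 := by nlinarith
      have n4 : t^2 - 1 ≠ 0 := by nlinarith
      field_simp
      ring
    rw [key]
    -- bound 2t/(t²−1) ≤ t/s
    have hlog2 : 2*s ≤ t^2 - 1 := by
      have := Real.log_le_sub_one_of_pos (by positivity : (0:ℝ) < t^2)
      rw [show Real.log (t^2) = 2*s by rw [hs, Real.log_pow]; push_cast; ring] at this
      linarith
    have l1 : 2*t/(t^2-1) ≤ t/s := by
      have h3 := div_le_div_of_nonneg_left (by positivity : (0:ℝ) ≤ 2*t)
        (by positivity : (0:ℝ) < 2*s) hlog2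
      calc 2*t/(t^2-1) ≤ 2*t/(2*s) := h3
        _ = t/s := by rw [div_eq_div_iff (by positivity) hsne]; ring
    -- e-term lower bound
    have hEinv : Real.exp (-(2*r*s)) = (t^(2*r))⁻¹ := by rw [hrpow, Real.exp_neg]
    have he1 : 1 - (t^(2*r))⁻¹ ≤ 2*r*s := by
      have := Real.add_one_le_exp (-(2*r*s))
      rw [hEinv] at this; linarith
    have hE1 : t^(2*r) - 1 ≤ 2*r*s * t^(2*r) := by
      have hinv : t^(2*r) * (t^(2*r))⁻¹ = 1 := mul_inv_cancel₀ hEne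
      nlinarith [hrp1]
    have l2 : t/(s * t^(2*r)) ≤ 2*r*t/(t^(2*r)-1) := by
      have h4 := div_le_div_of_nonneg_left (by positivity : (0:ℝ) ≤ 2*r*t)
        (by nlinarith : (0:ℝ) < t^(2*r)-1) hE1
      calc t/(s * t^(2*r)) = 2*r*t/(2*r*s*t^(2*r)) := by
            rw [div_eq_div_iff (by positivity) (by positivity)]; ring
        _ ≤ 2*r*t/(t^(2*r)-1) := h4
    have l3 : t/s - t/(s * t^(2*r)) ≤ 2*r*t := by
      have heq : t/s - t/(s * t^(2*r)) = (t/s) * (1 - (t^(2*r))⁻¹) := by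
        field_simp
      rw [heq]
      have hts : 0 ≤ t/s := by positivity
      calc (t/s) * (1 - (t^(2*r))⁻¹) ≤ (t/s) * (2*r*s) := by
            exact mul_le_mul_of_nonneg_left he1 hts
        _ = 2*r*t := by field_simp [hsne]
    rcases le_or_gt t 2 with h2 | h2
    · rw [Bker, if_pos h2]; linarith
    · rw [Bker, if_neg (not_le.2 h2)]
      have hpos : 0 ≤ 2*r*t/(t^(2*r)-1) := by
        apply div_nonneg (by positivity); nlinarith
      linarith



lemma sqrt2_pos : (0:ℝ) < Real.sqrt 2 := Real.sqrt_pos.2 (by norm_num)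

lemma A_bound {r : ℝ} (hr : 1 ≤ r) :
    ∫⁻ t in Ioi (0:ℝ), ENNReal.ofReal (Bker r t * t ^ (-(1/2) : ℝ))
      ≤ ENNReal.ofReal (4 * Real.sqrt 2 * r + 8 * Real.sqrt 2 / 3) := by
  have hr0 : (0:ℝ) < r := lt_of_lt_of_le one_pos hr
  rw [← Ioc_union_Ioi_eq_Ioi (by norm_num : (0:ℝ) ≤ 2),
    lintegral_union measurableSet_Ioi Ioc_disjoint_Ioi_same]
  have part1 : ∫⁻ t in Ioc (0:ℝ) 2, ENNReal.ofReal (Bker r t * t ^ (-(1/2) : ℝ))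
      = ENNReal.ofReal (8 * Real.sqrt 2 / 3 * r) := by
    rw [setLIntegral_congr_fun measurableSet_Ioc (
      (fun t ht => ?_ : ∀ t ∈ Ioc (0:ℝ) 2,
        ENNReal.ofReal (Bker r t * t ^ (-(1/2) : ℝ))
          = ENNReal.ofReal (2*r * t ^ ((1/2) : ℝ))))]
    · have hint : IntegrableOn (fun t : ℝ => 2*r * t ^ ((1/2) : ℝ)) (Ioc 0 2) := by
        rw [← intervalIntegrable_iff_integrableOn_Ioc_of_le (by norm_num : (0:ℝ) ≤ 2)]
        exact (intervalIntegral.intervalIntegrable_rpow (Or.inl (by norm_num))).const_mul _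
      rw [← ofReal_integral_eq_lintegral_ofReal hint
        ((ae_restrict_iff' measurableSet_Ioc).2 (ae_of_all _ (fun t ht => mul_nonneg (by positivity) (Real.rpow_nonneg ht.1.le _))))]
      congr 1
      rw [← intervalIntegral.integral_of_le (by norm_num : (0:ℝ) ≤ 2),
        intervalIntegral.integral_const_mul,
        integral_rpow (Or.inl (by norm_num))]
      rw [Real.zero_rpow (by norm_num)]
      have h32 : (2:ℝ) ^ ((1/2:ℝ) + 1) = 2 * Real.sqrt 2 := by
        rw [show (1/2:ℝ) + 1 = 1 + 1/2 by norm_num, Real.rpow_add (by norm_num : (0:ℝ) < 2),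
          Real.rpow_one, ← Real.sqrt_eq_rpow]
      rw [h32]; ring
    · have ht0 := ht.1
      rw [Bker, if_pos ht.2]
      congr 1
      rw [show 2*r*t = 2*r * t ^ (1:ℝ) by rw [Real.rpow_one], mul_assoc,
        ← Real.rpow_add ht0]
      norm_num
  have part2 : ∫⁻ t in Ioi (2:ℝ), ENNReal.ofReal (Bker r t * t ^ (-(1/2) : ℝ))
      ≤ ENNReal.ofReal (8 * Real.sqrt 2 / 3) := by
    have step1 : ∫⁻ t in Ioi (2:ℝ), ENNReal.ofReal (Bker r t * t ^ (-(1/2) : ℝ))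
        ≤ ∫⁻ t in Ioi (2:ℝ), ENNReal.ofReal ((8/3) * t ^ (-(3/2) : ℝ)) := by
      apply setLIntegral_mono' measurableSet_Ioi
      intro t ht
      have ht2 : (2:ℝ) < t := ht
      have ht0 : (0:ℝ) < t := by linarith
      apply ENNReal.ofReal_le_ofReal
      rw [Bker, if_neg (not_le.2 ht2)]
      have hb : 2*t/(t^2-1) ≤ (8/3) * t⁻¹ := by
        have h34 : (3/4:ℝ)*t^2 ≤ t^2 - 1 := by nlinarith
        have := div_le_div_of_nonneg_left (by positivity : (0:ℝ) ≤ 2*t)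
          (by positivity : (0:ℝ) < (3/4)*t^2) h34
        calc 2*t/(t^2-1) ≤ 2*t/((3/4)*t^2) := this
          _ = (8/3) * t⁻¹ := by field_simp; ring
      calc 2*t/(t^2-1) * t ^ (-(1/2):ℝ)
          ≤ ((8/3) * t⁻¹) * t ^ (-(1/2):ℝ) := by
            exact mul_le_mul_of_nonneg_right hb (Real.rpow_nonneg ht0.le _)
        _ = (8/3) * t ^ (-(3/2):ℝ) := by
            rw [mul_assoc, ← Real.rpow_neg_one t, ← Real.rpow_add ht0]
            norm_num
    have step2 : ∫⁻ t in Ioi (2:ℝ), ENNReal.ofReal ((8/3) * t ^ (-(3/2) : ℝ))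
        = ENNReal.ofReal (8 * Real.sqrt 2 / 3) := by
      have hint : IntegrableOn (fun t : ℝ => (8/3) * t ^ (-(3/2) : ℝ)) (Ioi 2) :=
        (integrableOn_Ioi_rpow_of_lt (by norm_num) (by norm_num : (0:ℝ) < 2)).const_mul _
      rw [← ofReal_integral_eq_lintegral_ofReal hint
        ((ae_restrict_iff' measurableSet_Ioi).2 (ae_of_all _ (fun t ht => by
          have : (0:ℝ) < t := lt_trans (by norm_num) ht
          positivity)))]
      congr 1
      rw [MeasureTheory.integral_const_mul, integral_Ioi_rpow_of_lt (by norm_num)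
        (by norm_num : (0:ℝ) < 2)]
      have hhalf : (2:ℝ) ^ ((-(3/2):ℝ) + 1) = (Real.sqrt 2)⁻¹ := by
        rw [show (-(3/2):ℝ) + 1 = -(1/2) by norm_num, Real.rpow_neg (by norm_num),
          ← Real.sqrt_eq_rpow]
      rw [hhalf]
      have h2 : Real.sqrt 2 * Real.sqrt 2 = 2 := Real.mul_self_sqrt (by norm_num)
      field_simp
      nlinarith [sqrt2_pos]
    exact step1.trans_eq step2
  calc _ ≤ ENNReal.ofReal (8 * Real.sqrt 2 / 3 * r) + ENNReal.ofReal (8 * Real.sqrt 2 / 3) := by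
        rw [part1]; exact add_le_add le_rfl part2
    _ ≤ ENNReal.ofReal (4 * Real.sqrt 2 * r + 8 * Real.sqrt 2 / 3) := by
        rw [← ENNReal.ofReal_add (by positivity) (by positivity)]
        apply ENNReal.ofReal_le_ofReal
        nlinarith [sqrt2_pos]



lemma Bker_nonneg {r t : ℝ} (hr : 1 ≤ r) (ht : 0 < t) : 0 ≤ Bker r t := by
  rw [Bker]; split
  · nlinarith
  · rename_i h
    have : (2:ℝ) < t := not_le.1 h
    apply div_nonneg (by linarith); nlinarith

lemma Bker_measurable (r : ℝ) : Measurable (Bker r) := by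
  unfold Bker
  exact Measurable.ite (measurableSet_le measurable_id measurable_const)
    (by fun_prop) (by fun_prop)

lemma lintegral_Ioi_scale {h : ℝ → ℝ≥0∞} (hm : Measurable h) {t : ℝ} (ht : 0 < t) :
    ∫⁻ x in Ioi (0:ℝ), h (t * x) = ENNReal.ofReal t⁻¹ * ∫⁻ y in Ioi (0:ℝ), h y := by
  have key : ∀ x : ℝ, (Ioi (0:ℝ)).indicator (fun y => h (t*y)) x
      = ((Ioi (0:ℝ)).indicator h) (t*x) := by
    intro x
    by_cases hx : x ∈ Ioi (0:ℝ)
    · rw [indicator_of_mem hx, indicator_of_mem (show t*x ∈ Ioi (0:ℝ) from mul_pos ht hx)]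
    · rw [indicator_of_notMem hx, indicator_of_notMem]
      simp only [mem_Ioi, not_lt] at hx ⊢
      nlinarith
  have hind : Measurable ((Ioi (0:ℝ)).indicator h) := hm.indicator measurableSet_Ioi
  calc ∫⁻ x in Ioi (0:ℝ), h (t * x)
      = ∫⁻ x, (Ioi (0:ℝ)).indicator (fun y => h (t*y)) x := by
        rw [lintegral_indicator measurableSet_Ioi]
    _ = ∫⁻ x, ((Ioi (0:ℝ)).indicator h) (t*x) := by simp_rw [key]
    _ = ∫⁻ y, ((Ioi (0:ℝ)).indicator h) y ∂(Measure.map (t * ·) volume) := by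
        rw [lintegral_map hind (measurable_const_mul t)]
    _ = ENNReal.ofReal t⁻¹ * ∫⁻ y in Ioi (0:ℝ), h y := by
        rw [Real.map_volume_mul_left (ne_of_gt ht), lintegral_smul_measure,
          lintegral_indicator measurableSet_Ioi, abs_of_pos (inv_pos.2 ht), smul_eq_mul]

section core
variable {r : ℝ}

lemma core_bound (hr : 1 ≤ r) (g : ℝ → ℝ) (hgm : Measurable g)
    (hA : ∫⁻ t in Ioi (0:ℝ), ENNReal.ofReal (Bker r t * t ^ (-(1/2) : ℝ))
      ≤ ENNReal.ofReal (4 * Real.sqrt 2 * r + 8 * Real.sqrt 2 / 3))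
    (hK : ∀ t : ℝ, 0 < t →
      2 * r * t / (1 - t ^ (2 * r)) - 2 * t / (1 - t ^ 2) ≤ Bker r t) :
    (∫⁻ x in Ioi (0 : ℝ),
        (∫⁻ t in Ioi (0 : ℝ),
          ENNReal.ofReal
            ((2 * r * t / (1 - t ^ (2 * r)) - 2 * t / (1 - t ^ 2)) * |g (t * x)|)) ^ (2 : ℝ))
        ^ (1/2 : ℝ)
      ≤ ENNReal.ofReal (4 * Real.sqrt 2 * r + 8 * Real.sqrt 2 / 3) *
          (∫⁻ y in Ioi (0:ℝ), (‖g y‖₊ : ℝ≥0∞) ^ (2:ℝ)) ^ (1/2 : ℝ) := by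
  set C : ℝ≥0∞ := ENNReal.ofReal (4 * Real.sqrt 2 * r + 8 * Real.sqrt 2 / 3) with hC
  set G : ℝ → ℝ≥0∞ := fun y => (‖g y‖₊ : ℝ≥0∞) with hG
  have hGm : Measurable G := hgm.nnnorm.coe_nnreal_ennreal
  set u : ℝ → ℝ≥0∞ := fun t => ENNReal.ofReal (Bker r t * t ^ (-(1/2) : ℝ)) with hu
  set v : ℝ → ℝ≥0∞ := fun t => ENNReal.ofReal (Bker r t * t ^ ((1/2) : ℝ)) with hv
  have hum : Measurable u := ((Bker_measurable r).mul (by fun_prop)).ennreal_ofReal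
  have hvm : Measurable v := ((Bker_measurable r).mul (by fun_prop)).ennreal_ofReal
  set A : ℝ≥0∞ := ∫⁻ t in Ioi (0:ℝ), u t with hAdef
  have hAC : A ≤ C := hA
  have hAtop : A ≠ ⊤ := (lt_of_le_of_lt hAC ENNReal.ofReal_lt_top).ne
  set M : ℝ≥0∞ := ∫⁻ y in Ioi (0:ℝ), G y ^ (2:ℝ) with hM
  set W : ℝ → ℝ≥0∞ := fun x => ∫⁻ t in Ioi (0:ℝ), v t * G (t*x) ^ (2:ℝ) with hW
  -- Step 1: inner Cauchy-Schwarz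
  have step1 : ∀ x : ℝ, 0 < x →
      (∫⁻ t in Ioi (0 : ℝ),
        ENNReal.ofReal
          ((2 * r * t / (1 - t ^ (2 * r)) - 2 * t / (1 - t ^ 2)) * |g (t * x)|))
      ≤ A ^ (1/2 : ℝ) * (W x) ^ (1/2 : ℝ) := by
    intro x hx
    have pt : ∀ t : ℝ, t ∈ Ioi (0:ℝ) →
        ENNReal.ofReal
          ((2 * r * t / (1 - t ^ (2 * r)) - 2 * t / (1 - t ^ 2)) * |g (t * x)|)
        ≤ (u t) ^ (1/2:ℝ) * ((v t) ^ (1/2:ℝ) * G (t*x)) := by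
      intro t ht
      have ht0 : (0:ℝ) < t := ht
      have h1 : ENNReal.ofReal
          ((2 * r * t / (1 - t ^ (2 * r)) - 2 * t / (1 - t ^ 2)) * |g (t * x)|)
          ≤ ENNReal.ofReal (Bker r t * |g (t * x)|) :=
        ENNReal.ofReal_le_ofReal
          (mul_le_mul_of_nonneg_right (hK t ht0) (abs_nonneg _))
      have h2 : (u t) ^ (1/2:ℝ) * ((v t) ^ (1/2:ℝ) * G (t*x))
          = ENNReal.ofReal (Bker r t * |g (t * x)|) := by
        rw [← mul_assoc, ← ENNReal.mul_rpow_of_nonneg _ _ (by norm_num : (0:ℝ) ≤ 1/2)]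
        have huv : u t * v t = ENNReal.ofReal (Bker r t) ^ (2:ℕ) := by
          rw [hu, hv, ← ENNReal.ofReal_mul (mul_nonneg (Bker_nonneg hr ht0)
            (Real.rpow_nonneg ht0.le _)), sq]
          rw [← ENNReal.ofReal_mul (Bker_nonneg hr ht0)]
          congr 1
          rw [show Bker r t * t ^ (-(1/2):ℝ) * (Bker r t * t ^ ((1/2):ℝ))
              = Bker r t * Bker r t * (t ^ (-(1/2):ℝ) * t ^ ((1/2):ℝ)) by ring,
            ← Real.rpow_add ht0]
          norm_num
        rw [huv, ← ENNReal.rpow_natCast (ENNReal.ofReal (Bker r t)) 2,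
          ← ENNReal.rpow_mul]
        norm_num
        rw [ENNReal.ofReal_mul (Bker_nonneg hr ht0)]
        simp [hG, ← enorm_eq_nnnorm, Real.enorm_eq_ofReal_abs]
      exact h1.trans_eq h2.symm
    calc (∫⁻ t in Ioi (0 : ℝ), ENNReal.ofReal
          ((2 * r * t / (1 - t ^ (2 * r)) - 2 * t / (1 - t ^ 2)) * |g (t * x)|))
        ≤ ∫⁻ t in Ioi (0:ℝ), (fun s => (u s) ^ (1/2:ℝ)) t *
            (fun s => (v s) ^ (1/2:ℝ) * G (s*x)) t :=
          setLIntegral_mono' measurableSet_Ioi pt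
      _ ≤ (∫⁻ t in Ioi (0:ℝ), ((u t) ^ (1/2:ℝ)) ^ (2:ℝ)) ^ (1/(2:ℝ)) *
          (∫⁻ t in Ioi (0:ℝ), ((v t) ^ (1/2:ℝ) * G (t*x)) ^ (2:ℝ)) ^ (1/(2:ℝ)) :=
          ENNReal.lintegral_mul_le_Lp_mul_Lq _ Real.HolderConjugate.two_two
            (by fun_prop) (by fun_prop)
      _ = A ^ (1/2 : ℝ) * (W x) ^ (1/2 : ℝ) := by
          congr 1
          · congr 1
            apply lintegral_congr
            intro t
            rw [← ENNReal.rpow_mul]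
            norm_num
          · congr 1
            apply lintegral_congr
            intro t
            rw [ENNReal.mul_rpow_of_nonneg _ _ (by norm_num : (0:ℝ) ≤ 2),
              ← ENNReal.rpow_mul]
            norm_num
  -- Step 2: outer integral
  have step2 : (∫⁻ x in Ioi (0 : ℝ),
      (∫⁻ t in Ioi (0 : ℝ), ENNReal.ofReal
        ((2 * r * t / (1 - t ^ (2 * r)) - 2 * t / (1 - t ^ 2)) * |g (t * x)|)) ^ (2 : ℝ))
      ≤ A * ∫⁻ x in Ioi (0:ℝ), W x := by
    rw [← lintegral_const_mul' _ _ hAtop]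
    apply setLIntegral_mono' measurableSet_Ioi
    intro x hx
    calc (∫⁻ t in Ioi (0 : ℝ), ENNReal.ofReal
          ((2 * r * t / (1 - t ^ (2 * r)) - 2 * t / (1 - t ^ 2)) * |g (t * x)|)) ^ (2 : ℝ)
        ≤ (A ^ (1/2 : ℝ) * (W x) ^ (1/2 : ℝ)) ^ (2:ℝ) :=
          ENNReal.rpow_le_rpow (step1 x hx) (by norm_num)
      _ = A * W x := by
          rw [ENNReal.mul_rpow_of_nonneg _ _ (by norm_num : (0:ℝ) ≤ 2),
            ← ENNReal.rpow_mul, ← ENNReal.rpow_mul]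
          norm_num
  -- Step 3: compute ∫ W via Tonelli and scaling
  have step3 : ∫⁻ x in Ioi (0:ℝ), W x = A * M := by
    have hswap : ∫⁻ x in Ioi (0:ℝ), W x
        = ∫⁻ t in Ioi (0:ℝ), ∫⁻ x in Ioi (0:ℝ), v t * G (t*x) ^ (2:ℝ) := by
      apply lintegral_lintegral_swap
      apply Measurable.aemeasurable
      apply Measurable.mul
      · exact hvm.comp measurable_snd
      · fun_prop
    rw [hswap]
    have hptw : ∀ t : ℝ, t ∈ Ioi (0:ℝ) →
        (∫⁻ x in Ioi (0:ℝ), v t * G (t*x) ^ (2:ℝ)) = u t * M := by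
      intro t ht
      have ht0 : (0:ℝ) < t := ht
      rw [lintegral_const_mul' _ _ ENNReal.ofReal_ne_top,
        lintegral_Ioi_scale (h := fun y => G y ^ (2:ℝ)) (by fun_prop) ht0]
      rw [← mul_assoc]
      congr 1
      show ENNReal.ofReal (Bker r t * t ^ ((1/2):ℝ)) * ENNReal.ofReal t⁻¹
          = ENNReal.ofReal (Bker r t * t ^ (-(1/2):ℝ))
      rw [← ENNReal.ofReal_mul (mul_nonneg (Bker_nonneg hr ht0)
        (Real.rpow_nonneg ht0.le _))]
      congr 1
      rw [mul_assoc, ← Real.rpow_neg_one t, ← Real.rpow_add ht0]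
      norm_num
    rw [setLIntegral_congr_fun measurableSet_Ioi hptw,
      lintegral_mul_const _ hum]
  -- conclude
  calc (∫⁻ x in Ioi (0 : ℝ),
      (∫⁻ t in Ioi (0 : ℝ), ENNReal.ofReal
        ((2 * r * t / (1 - t ^ (2 * r)) - 2 * t / (1 - t ^ 2)) * |g (t * x)|)) ^ (2 : ℝ))
        ^ (1/2 : ℝ)
      ≤ (A * (A * M)) ^ (1/2 : ℝ) := by
        apply ENNReal.rpow_le_rpow _ (by norm_num)
        rw [← step3]; exact step2
    _ ≤ (C * (C * M)) ^ (1/2 : ℝ) := by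
        apply ENNReal.rpow_le_rpow _ (by norm_num)
        exact mul_le_mul' hAC (mul_le_mul' hAC le_rfl)
    _ = C * M ^ (1/2 : ℝ) := by
        rw [← mul_assoc, ← sq, ← ENNReal.rpow_natCast (C) 2,
          ENNReal.mul_rpow_of_nonneg _ _ (by norm_num : (0:ℝ) ≤ 1/2),
          ← ENNReal.rpow_mul]
        norm_num


/-- Key `L²` estimate for the second-derivative kernel: for all `r ≥ 1` and
`f ∈ L²((0,∞))`, the function
`g(x) = ∫₀^∞ (2r·t/(1−t^(2r)) − 2t/(1−t²))·|f(tx)| dt` satisfies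
`‖g‖_{L²(0,∞)} ≤ (4√2·r + 8√2/3)·‖f‖_{L²(0,∞)}` (interpreted in `[0,∞]`). -/
theorem Hr_second_deriv_L2_bound (r : ℝ) (hr : 1 ≤ r) (f : ℝ → ℝ)
    (hf : MemLp f 2 (volume.restrict (Set.Ioi 0))) :
    (∫⁻ x in Set.Ioi (0 : ℝ),
        (∫⁻ t in Set.Ioi (0 : ℝ),
          ENNReal.ofReal
            ((2 * r * t / (1 - t ^ (2 * r)) - 2 * t / (1 - t ^ 2)) * |f (t * x)|)) ^ (2 : ℝ))
        ^ (1/2 : ℝ)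
      ≤ ENNReal.ofReal (4 * Real.sqrt 2 * r + 8 * Real.sqrt 2 / 3) *
          eLpNorm f 2 (volume.restrict (Set.Ioi 0)) := by

  obtain ⟨hmeas, hfin⟩ := hf
  set g := hmeas.mk f with hgdef
  have hgm : Measurable g := hmeas.stronglyMeasurable_mk.measurable
  have hfg : f =ᵐ[volume.restrict (Ioi 0)] g := hmeas.ae_eq_mk
  have hD : volume ({x | f x ≠ g x} ∩ Ioi 0) = 0 := by
    have h0 : volume.restrict (Ioi (0:ℝ)) {x | f x ≠ g x} = 0 := by
      exact ae_iff.1 hfg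
    rwa [Measure.restrict_apply' measurableSet_Ioi] at h0
  set E := toMeasurable volume ({x | f x ≠ g x} ∩ Ioi 0) with hEdef
  have hE0 : volume E = 0 := by rw [hEdef, measure_toMeasurable]; exact hD
  have hsubE : {x | f x ≠ g x} ∩ Ioi 0 ⊆ E := subset_toMeasurable _ _
  have inner_eq : ∀ x ∈ Ioi (0:ℝ),
      (∫⁻ t in Ioi (0:ℝ), ENNReal.ofReal
        ((2 * r * t / (1 - t ^ (2 * r)) - 2 * t / (1 - t ^ 2)) * |f (t * x)|))
      = ∫⁻ t in Ioi (0:ℝ), ENNReal.ofReal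
        ((2 * r * t / (1 - t ^ (2 * r)) - 2 * t / (1 - t ^ 2)) * |g (t * x)|) := by
    intro x hx
    have hx0 : (0:ℝ) < x := hx
    apply lintegral_congr_ae
    refine (ae_restrict_iff' measurableSet_Ioi).mpr ?_
    have hnull : volume ((· * x) ⁻¹' E) = 0 := by
      rw [Real.volume_preimage_mul_right (ne_of_gt hx0), hE0, mul_zero]
    rw [ae_iff]
    apply measure_mono_null _ hnull
    intro t htbad
    simp only [mem_setOf_eq, not_forall] at htbad
    have ht0 : t ∈ Ioi (0:ℝ) := htbad.1
    have hne : f (t * x) ≠ g (t * x) := by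
      intro hcontra
      exact htbad.2 (by rw [hcontra])
    exact hsubE ⟨hne, mul_pos ht0 hx0⟩
  have lhs_eq : (∫⁻ x in Ioi (0 : ℝ),
        (∫⁻ t in Ioi (0 : ℝ), ENNReal.ofReal
          ((2 * r * t / (1 - t ^ (2 * r)) - 2 * t / (1 - t ^ 2)) * |f (t * x)|)) ^ (2 : ℝ))
      = ∫⁻ x in Ioi (0 : ℝ),
        (∫⁻ t in Ioi (0 : ℝ), ENNReal.ofReal
          ((2 * r * t / (1 - t ^ (2 * r)) - 2 * t / (1 - t ^ 2)) * |g (t * x)|)) ^ (2 : ℝ) := by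
    apply setLIntegral_congr_fun measurableSet_Ioi
    intro x hx
    simp only [inner_eq x hx]
  rw [lhs_eq, eLpNorm_congr_ae hfg]
  have hsnorm : eLpNorm g 2 (volume.restrict (Ioi 0))
      = (∫⁻ y in Ioi (0:ℝ), (‖g y‖₊ : ℝ≥0∞) ^ (2:ℝ)) ^ (1/2 : ℝ) := by
    rw [eLpNorm_eq_lintegral_rpow_enorm_toReal (by norm_num) (by norm_num)]
    simp only [enorm_eq_nnnorm]
    norm_num
  rw [hsnorm]
  exact core_bound hr g hgm (A_bound hr) (fun t ht => kernel_le hr ht)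
end core
end

section
/- Let α ∈ (0, 1), and set s = sin(απ/2), c = cos(απ/2), D(x) = x² + 2cx + 1. Then D(x) > 0 for all real x, and the function W(x) = −2sx/D(x) is differentiable with W'(x) = −2s(1 − x²)/D(x)², and it satisfies for every real x the identity x·W'(x) + (1 − 2(cx + 1)/D(x))·W(x) = 0. -/
open Real

/-- The explicit self-similar profile at `a = 0`: for `α ∈ (0,1)`, with `s = sin(απ/2)`,
`c = cos(απ/2)`, `D(x) = x² + 2cx + 1`, one has `D > 0` everywhere, the profile
`W(x) = −2sx/D(x)` has derivative `W'(x) = −2s(1 − x²)/D(x)²`, and the steady-state identity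
`x·W'(x) + (1 − 2(cx + 1)/D(x))·W(x) = 0` holds for all real `x`. -/
theorem explicit_profile_steady_state (α : ℝ) (hα : α ∈ Set.Ioo (0 : ℝ) 1) :
    (∀ x : ℝ, 0 < x ^ 2 + 2 * cos (α * π / 2) * x + 1) ∧
    (∀ x : ℝ,
      HasDerivAt (fun x : ℝ => -2 * sin (α * π / 2) * x / (x ^ 2 + 2 * cos (α * π / 2) * x + 1))
        (-2 * sin (α * π / 2) * (1 - x ^ 2) / (x ^ 2 + 2 * cos (α * π / 2) * x + 1) ^ 2) x) ∧
    (∀ x : ℝ,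
      x * (-2 * sin (α * π / 2) * (1 - x ^ 2) / (x ^ 2 + 2 * cos (α * π / 2) * x + 1) ^ 2) +
        (1 - 2 * (cos (α * π / 2) * x + 1) / (x ^ 2 + 2 * cos (α * π / 2) * x + 1)) *
          (-2 * sin (α * π / 2) * x / (x ^ 2 + 2 * cos (α * π / 2) * x + 1)) = 0) := by
  obtain ⟨h0, h1⟩ := hα
  set c := cos (α * π / 2) with hc
  have hc1 : c ^ 2 < 1 := by
    have h : c < 1 := by
      have hs : 0 < sin (α * π / 2) := sin_pos_of_pos_of_lt_pi (by positivity) (by nlinarith [pi_pos])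
      nlinarith [cos_le_one (α * π / 2), sin_sq_add_cos_sq (α * π / 2)]
    have h' : 0 < c := cos_pos_of_mem_Ioo ⟨by nlinarith [pi_pos], by nlinarith [pi_pos]⟩
    nlinarith
  have hD : ∀ x : ℝ, 0 < x ^ 2 + 2 * c * x + 1 := by
    intro x
    nlinarith [sq_nonneg (x + c)]
  refine ⟨hD, ?_, ?_⟩
  · intro x
    have hDx := (hD x).ne'
    have h1 : HasDerivAt (fun x : ℝ => -2 * sin (α * π / 2) * x) (-2 * sin (α * π / 2)) x := by
      simpa using (hasDerivAt_id x).const_mul (-2 * sin (α * π / 2))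
    have h2 : HasDerivAt (fun x : ℝ => x ^ 2 + 2 * c * x + 1) (2 * x + 2 * c) x := by
      have := ((hasDerivAt_pow 2 x).add (((hasDerivAt_id x).const_mul (2 * c)))).add_const 1
      simpa [mul_comm] using this
    have := h1.div h2 hDx
    refine this.congr_deriv ?_
    ring
  · intro x
    have hDx := (hD x).ne'
    have hDx' : x * (x + 2 * c) + 1 ≠ 0 := by convert hDx using 1; ring
    field_simp
    ring
end
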